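/- arXiv:1109.6463 — 6 statements merged into one kernel-verified Lean document; each statement's English description precedes it below -/
import Mathlib

section
/- Let ν be a probability measure on ℝ and let K > 0 be such that Im s(z; ν) ≤ K for all z ∈ ℂ with Im z > 0. Then ν is absolutely continuous with respect to Lebesgue measure and its Radon–Nikodym density is bounded above by K/π Lebesgue-almost everywhere. -/
open MeasureTheory
open scoped ENNReal
open Set Real Filter Topology

noncomputable section

/-- The Cauchy–Stieltjes transform `s(z; ν) = ∫ (x - z)⁻¹ dν(x)`. -/
def stieltjesTransform (ν : Measure ℝ) (z : ℂ) : ℂ := ∫ x, ((x : ℂ) - z)⁻¹ ∂ν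

namespace AuxStieltjes

lemma im_inv (t x ε : ℝ) (hε : 0 < ε) :
    (((t : ℂ) - (x + ε * Complex.I))⁻¹).im = ε / ((t - x) ^ 2 + ε ^ 2) := by
  have hre : ((t : ℂ) - (x + ε * Complex.I)).re = t - x := by simp
  have him : ((t : ℂ) - (x + ε * Complex.I)).im = -ε := by simp
  rw [Complex.inv_im, him, Complex.normSq_apply, hre, him]
  ring_nf

lemma integrable_inv (ν : Measure ℝ) [IsFiniteMeasure ν] (z : ℂ) (hz : 0 < z.im) :
    Integrable (fun t : ℝ => ((t : ℂ) - z)⁻¹) ν := by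
  have hne : ∀ t : ℝ, ((t : ℂ) - z) ≠ 0 := by
    intro t h
    have : ((t : ℂ) - z).im = 0 := by rw [h]; simp
    simp only [Complex.sub_im, Complex.ofReal_im, zero_sub, neg_eq_zero] at this
    exact hz.ne' this
  have hcont : Continuous fun t : ℝ => ((t : ℂ) - z)⁻¹ :=
    ((Complex.continuous_ofReal.sub continuous_const).inv₀ hne)
  refine (integrable_const (z.im)⁻¹).mono' hcont.aestronglyMeasurable ?_
  refine Filter.Eventually.of_forall fun t => ?_
  rw [norm_inv]
  have h1 : z.im ≤ ‖(t : ℂ) - z‖ := by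
    have := Complex.abs_im_le_norm ((t : ℂ) - z)
    simp only [Complex.sub_im, Complex.ofReal_im, zero_sub, abs_neg] at this
    calc z.im ≤ |z.im| := le_abs_self _
    _ ≤ ‖(t : ℂ) - z‖ := this
  exact inv_anti₀ hz h1

lemma im_transform (ν : Measure ℝ) [IsFiniteMeasure ν] (x ε : ℝ) (hε : 0 < ε) :
    (stieltjesTransform ν (x + ε * Complex.I)).im
      = ∫ t, ε / ((t - x) ^ 2 + ε ^ 2) ∂ν := by
  have hz : (0:ℝ) < (x + ε * Complex.I : ℂ).im := by simpa using hε
  have h := integral_im (𝕜 := ℂ) (integrable_inv ν _ hz)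
  simp only [RCLike.im_to_complex] at h
  rw [stieltjesTransform, ← h]
  congr 1
  ext t
  exact im_inv t x ε hε

end AuxStieltjes

namespace AuxStieltjes

lemma interval_int (t ε : ℝ) (hε : 0 < ε) (a b : ℝ) :
    ∫ x in a..b, ε / ((t - x) ^ 2 + ε ^ 2)
      = arctan ((b - t) / ε) - arctan ((a - t) / ε) := by
  have key : ∀ x : ℝ, ε / ((t - x) ^ 2 + ε ^ 2)
      = ε⁻¹ * (1 + ((x - t) / ε) ^ 2)⁻¹ := by
    intro x
    field_simp
    ring
  simp only [key]
  rw [intervalIntegral.integral_const_mul]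
  have h1 : (∫ x in a..b, (1 + ((x - t) / ε) ^ 2)⁻¹)
      = ∫ x in (a - t)..(b - t), (1 + (x / ε) ^ 2)⁻¹ := by
    exact intervalIntegral.integral_comp_sub_right (fun x => (1 + (x / ε) ^ 2)⁻¹) t
  have h2 : (∫ x in (a - t)..(b - t), (1 + (x / ε) ^ 2)⁻¹)
      = ε • ∫ x in ((a - t)/ε)..((b - t)/ε), (1 + x ^ 2)⁻¹ := by
    exact intervalIntegral.integral_comp_div (fun x => (1 + x ^ 2)⁻¹) hε.ne'
  rw [h1, h2, integral_inv_one_add_sq, smul_eq_mul]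
  field_simp

end AuxStieltjes

namespace AuxStieltjes

lemma poisson_cont (x ε : ℝ) (hε : 0 < ε) :
    Continuous (fun t : ℝ => ε / ((t - x) ^ 2 + ε ^ 2)) := by
  apply continuous_const.div
  · continuity
  · intro t; positivity

lemma poisson_integrable (ν : Measure ℝ) [IsFiniteMeasure ν] (x ε : ℝ) (hε : 0 < ε) :
    Integrable (fun t : ℝ => ε / ((t - x) ^ 2 + ε ^ 2)) ν := by
  refine (integrable_const ε⁻¹).mono' (poisson_cont x ε hε).aestronglyMeasurable ?_
  refine Filter.Eventually.of_forall fun t => ?_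
  rw [Real.norm_eq_abs, abs_of_nonneg (by positivity)]
  calc ε / ((t - x) ^ 2 + ε ^ 2) ≤ ε / ε ^ 2 := by
        apply div_le_div_of_nonneg_left hε.le (by positivity)
        nlinarith [sq_nonneg (t - x)]
  _ = ε⁻¹ := by field_simp [pow_two]

lemma lint_poisson_le (ν : Measure ℝ) [IsFiniteMeasure ν] (K : ℝ)
    (h : ∀ z : ℂ, 0 < z.im → (stieltjesTransform ν z).im ≤ K)
    (x ε : ℝ) (hε : 0 < ε) :
    ∫⁻ t, ENNReal.ofReal (ε / ((t - x) ^ 2 + ε ^ 2)) ∂ν ≤ ENNReal.ofReal K := by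
  rw [← ofReal_integral_eq_lintegral_ofReal (poisson_integrable ν x ε hε)
    (Filter.Eventually.of_forall fun t => by positivity)]
  apply ENNReal.ofReal_le_ofReal
  rw [← im_transform ν x ε hε]
  exact h _ (by simpa using hε)

lemma lint_arctan_le (ν : Measure ℝ) [IsFiniteMeasure ν] (K : ℝ)
    (h : ∀ z : ℂ, 0 < z.im → (stieltjesTransform ν z).im ≤ K)
    (ε : ℝ) (hε : 0 < ε) (a b : ℝ) (hab : a ≤ b) :
    ∫⁻ t, ENNReal.ofReal (arctan ((b - t) / ε) - arctan ((a - t) / ε)) ∂ν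
      ≤ ENNReal.ofReal K * ENNReal.ofReal (b - a) := by
  have step1 : ∀ t : ℝ, ENNReal.ofReal (arctan ((b - t) / ε) - arctan ((a - t) / ε))
      = ∫⁻ x in Ioc a b, ENNReal.ofReal (ε / ((t - x) ^ 2 + ε ^ 2)) := by
    intro t
    have hint : IntegrableOn (fun x : ℝ => ε / ((t - x) ^ 2 + ε ^ 2)) (Ioc a b) := by
      apply Continuous.integrableOn_Ioc
      apply continuous_const.div
      · continuity
      · intro y; positivity
    rw [← ofReal_integral_eq_lintegral_ofReal hint
      (Filter.Eventually.of_forall fun y => by positivity)]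
    congr 1
    rw [← intervalIntegral.integral_of_le hab, interval_int t ε hε a b]
  simp only [step1]
  have hmeas : AEMeasurable (Function.uncurry fun (t x : ℝ) =>
      ENNReal.ofReal (ε / ((t - x) ^ 2 + ε ^ 2))) (ν.prod (volume.restrict (Ioc a b))) := by
    apply Measurable.aemeasurable
    apply ENNReal.measurable_ofReal.comp
    apply Measurable.div measurable_const
    apply Measurable.add _ measurable_const
    exact ((measurable_fst.sub measurable_snd).pow_const 2)
  rw [lintegral_lintegral_swap hmeas]
  calc ∫⁻ x in Ioc a b, ∫⁻ t, ENNReal.ofReal (ε / ((t - x) ^ 2 + ε ^ 2)) ∂ν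
      ≤ ∫⁻ _ in Ioc a b, ENNReal.ofReal K := by
        apply lintegral_mono
        intro x
        exact lint_poisson_le ν K h x ε hε
  _ = ENNReal.ofReal K * ENNReal.ofReal (b - a) := by
        rw [setLIntegral_const, Real.volume_Ioc]

end AuxStieltjes

namespace AuxStieltjes

lemma Ioo_bound (ν : Measure ℝ) [IsFiniteMeasure ν] (K : ℝ) (hK : 0 < K)
    (h : ∀ z : ℂ, 0 < z.im → (stieltjesTransform ν z).im ≤ K)
    (a b : ℝ) :
    ν (Ioo a b) ≤ ENNReal.ofReal (K / Real.pi) * ENNReal.ofReal (b - a) := by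
  rcases le_or_gt b a with hba | hab
  · simp [Ioo_eq_empty_of_le hba]
  set g : ℕ → ℝ → ℝ≥0∞ := fun n t =>
    ENNReal.ofReal (arctan ((b - t) * (n + 1)) - arctan ((a - t) * (n + 1))) with hg
  have hgen : ∀ n t, g n t = ENNReal.ofReal
      (arctan ((b - t) / ((n : ℝ) + 1)⁻¹) - arctan ((a - t) / ((n : ℝ) + 1)⁻¹)) := by
    intro n t
    simp [g, div_eq_mul_inv, inv_inv]
  have hεn : ∀ n : ℕ, (0:ℝ) < ((n : ℝ) + 1)⁻¹ := fun n => by positivity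
  -- each ∫⁻ g n ≤ K (b - a)
  have hbound : ∀ n, ∫⁻ t, g n t ∂ν ≤ ENNReal.ofReal K * ENNReal.ofReal (b - a) := by
    intro n
    simp only [hgen]
    exact lint_arctan_le ν K h _ (hεn n) a b hab.le
  -- pointwise liminf on Ioo
  have hlim : ∀ t ∈ Ioo a b, Tendsto (fun n => g n t) atTop (𝓝 (ENNReal.ofReal Real.pi)) := by
    intro t ht
    apply ENNReal.tendsto_ofReal
    have hn1 : Tendsto (fun n : ℕ => ((n : ℝ) + 1)) atTop atTop :=
      tendsto_atTop_add_const_right _ 1 tendsto_natCast_atTop_atTop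
    have h1 : Tendsto (fun n : ℕ => arctan ((b - t) * (n + 1))) atTop (𝓝 (Real.pi / 2)) := by
      apply (Real.tendsto_arctan_atTop.mono_right nhdsWithin_le_nhds).comp
      exact hn1.const_mul_atTop (by linarith [ht.2] : (0:ℝ) < b - t)
    have h2 : Tendsto (fun n : ℕ => arctan ((a - t) * (n + 1))) atTop (𝓝 (-(Real.pi / 2))) := by
      apply (Real.tendsto_arctan_atBot.mono_right nhdsWithin_le_nhds).comp
      have hbase := tendsto_neg_atTop_atBot.comp
        (hn1.const_mul_atTop (show (0:ℝ) < t - a by linarith [ht.1]))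
      exact hbase.congr fun n => by simp only [Function.comp_apply]; ring
    have h3 := h1.sub h2
    have heq : Real.pi / 2 - -(Real.pi / 2) = Real.pi := by ring
    rw [heq] at h3
    exact h3
  -- Fatou
  have key : ENNReal.ofReal Real.pi * ν (Ioo a b)
      ≤ ENNReal.ofReal K * ENNReal.ofReal (b - a) := by
    have hmg : ∀ n, Measurable (g n) := by
      intro n
      apply ENNReal.measurable_ofReal.comp
      have hc : ∀ c : ℝ, Continuous fun t : ℝ => arctan ((c - t) * ((n : ℝ) + 1)) :=
        fun c => Real.continuous_arctan.comp ((continuous_const.sub continuous_id).mul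
          continuous_const)
      exact ((hc b).sub (hc a)).measurable
    calc ENNReal.ofReal Real.pi * ν (Ioo a b)
        = ∫⁻ _ in Ioo a b, ENNReal.ofReal Real.pi ∂ν := by rw [setLIntegral_const]
    _ ≤ ∫⁻ t in Ioo a b, liminf (fun n => g n t) atTop ∂ν := by
        apply setLIntegral_mono (Measurable.liminf hmg)
        intro t ht
        exact ((hlim t ht).liminf_eq).ge
    _ ≤ ∫⁻ t, liminf (fun n => g n t) atTop ∂ν := setLIntegral_le_lintegral _ _
    _ ≤ liminf (fun n => ∫⁻ t, g n t ∂ν) atTop := lintegral_liminf_le hmg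
    _ ≤ liminf (fun _ : ℕ => ENNReal.ofReal K * ENNReal.ofReal (b - a)) atTop :=
        Filter.liminf_le_liminf (Filter.Eventually.of_forall hbound)
    _ = ENNReal.ofReal K * ENNReal.ofReal (b - a) := Filter.liminf_const _
  -- divide by π
  have hπ0 : ENNReal.ofReal Real.pi ≠ 0 := (ENNReal.ofReal_pos.mpr Real.pi_pos).ne'
  have hπt : ENNReal.ofReal Real.pi ≠ ∞ := ENNReal.ofReal_ne_top
  calc ν (Ioo a b) = (ENNReal.ofReal Real.pi)⁻¹ * (ENNReal.ofReal Real.pi * ν (Ioo a b)) := by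
        rw [← mul_assoc, ENNReal.inv_mul_cancel hπ0 hπt, one_mul]
  _ ≤ (ENNReal.ofReal Real.pi)⁻¹ * (ENNReal.ofReal K * ENNReal.ofReal (b - a)) :=
        mul_le_mul_right key _
  _ = ENNReal.ofReal (K / Real.pi) * ENNReal.ofReal (b - a) := by
        rw [ENNReal.ofReal_div_of_pos Real.pi_pos, ENNReal.div_eq_inv_mul, mul_assoc]

end AuxStieltjes

namespace AuxStieltjes

lemma Ioc_bound (ν : Measure ℝ) [IsFiniteMeasure ν] (K : ℝ) (hK : 0 < K)
    (h : ∀ z : ℂ, 0 < z.im → (stieltjesTransform ν z).im ≤ K)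
    (a b : ℝ) :
    ν (Ioc a b) ≤ ENNReal.ofReal (K / Real.pi) * ENNReal.ofReal (b - a) := by
  rcases le_or_gt b a with hba | hab
  · simp [Ioc_eq_empty_of_le hba]
  have hstep : ∀ n : ℕ, ν (Ioc a b)
      ≤ ENNReal.ofReal (K / Real.pi) * ENNReal.ofReal (b + ((n : ℝ) + 1)⁻¹ - a) := by
    intro n
    refine le_trans (measure_mono ?_) (Ioo_bound ν K hK h a (b + ((n : ℝ) + 1)⁻¹))
    apply Ioc_subset_Ioo_right
    have : (0:ℝ) < ((n : ℝ) + 1)⁻¹ := by positivity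
    linarith
  have htend : Tendsto (fun n : ℕ =>
      ENNReal.ofReal (K / Real.pi) * ENNReal.ofReal (b + ((n : ℝ) + 1)⁻¹ - a)) atTop
      (𝓝 (ENNReal.ofReal (K / Real.pi) * ENNReal.ofReal (b - a))) := by
    apply ENNReal.Tendsto.const_mul
    · apply ENNReal.tendsto_ofReal
      have h0 : Tendsto (fun n : ℕ => ((n : ℝ) + 1)⁻¹) atTop (𝓝 0) := by
        simpa using (tendsto_one_div_add_atTop_nhds_zero_nat :
          Tendsto (fun n : ℕ => 1 / ((n : ℝ) + 1)) atTop (𝓝 0))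
      have hb : Tendsto (fun n : ℕ => b + ((n : ℝ) + 1)⁻¹ - a) atTop (𝓝 (b + 0 - a)) :=
        ((tendsto_const_nhds (x := b)).add h0).sub tendsto_const_nhds
      simpa using hb
    · exact Or.inr ENNReal.ofReal_ne_top
  exact ge_of_tendsto' htend hstep

lemma le_smul_volume (ν : Measure ℝ) (c : ℝ≥0∞) (hc0 : c ≠ 0) (hct : c ≠ ∞)
    (hIoc : ∀ a b : ℝ, ν (Ioc a b) ≤ c * ENNReal.ofReal (b - a)) (s : Set ℝ) :
    ν s ≤ c * volume s := by
  have hlen : ∀ t : Set ℝ, ν t ≤ c * StieltjesFunction.id.length t := by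
    intro t
    rw [StieltjesFunction.length_eq]
    rw [ENNReal.mul_iInf' (fun h => absurd h hct) (fun h => absurd h hc0)]
    refine le_iInf fun a => ?_
    rw [ENNReal.mul_iInf' (fun h => absurd h hct) (fun h => absurd h hc0)]
    refine le_iInf fun b => ?_
    rw [ENNReal.mul_iInf' (fun h => absurd h hct) (fun h => absurd h hc0)]
    refine le_iInf fun hsub => ?_
    calc ν t ≤ ν (Ioc a b) := measure_mono (fun x hx => hsub ⟨hx, not_isBot x⟩)
    _ ≤ c * ENNReal.ofReal (b - a) := hIoc a b
    _ = c * ENNReal.ofReal (StieltjesFunction.id b - StieltjesFunction.id a) := by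
        simp [StieltjesFunction.id]
  have houter : ν s ≤ c * StieltjesFunction.id.outer s := by
    rw [StieltjesFunction.outer, OuterMeasure.ofFunction_apply]
    rw [ENNReal.mul_iInf' (fun h => absurd h hct) (fun h => absurd h hc0)]
    refine le_iInf fun t => ?_
    rw [ENNReal.mul_iInf' (fun h => absurd h hct) (fun h => absurd h hc0)]
    refine le_iInf fun hcov => ?_
    calc ν s ≤ ν (⋃ n, t n) := measure_mono hcov
    _ ≤ ∑' n, ν (t n) := measure_iUnion_le t
    _ ≤ ∑' n, c * StieltjesFunction.id.length (t n) := ENNReal.tsum_le_tsum fun n => hlen (t n)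
    _ = c * ∑' n, StieltjesFunction.id.length (t n) := ENNReal.tsum_mul_left
  rw [Real.volume_val, StieltjesFunction.measure]
  exact houter

end AuxStieltjes

/-- if the imaginary part of the Stieltjes transform of a probability measure
`ν` is bounded by `K` on the upper half plane, then `ν` is absolutely continuous w.r.t.
Lebesgue measure with density bounded by `K/π` almost everywhere. -/
theorem absolutely_continuous_of_bounded_stieltjes
    (ν : Measure ℝ) [IsProbabilityMeasure ν] (K : ℝ) (hK : 0 < K)
    (h : ∀ z : ℂ, 0 < z.im → (stieltjesTransform ν z).im ≤ K) :
    ν ≪ volume ∧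
      ∀ᵐ x ∂(volume : Measure ℝ), ν.rnDeriv volume x ≤ ENNReal.ofReal (K / Real.pi) := by
  set c : ℝ≥0∞ := ENNReal.ofReal (K / Real.pi) with hc
  have hc0 : c ≠ 0 := (ENNReal.ofReal_pos.mpr (div_pos hK Real.pi_pos)).ne'
  have hct : c ≠ ∞ := ENNReal.ofReal_ne_top
  have hle : ∀ s : Set ℝ, ν s ≤ c * volume s :=
    AuxStieltjes.le_smul_volume ν c hc0 hct (AuxStieltjes.Ioc_bound ν K hK h)
  have hac : ν ≪ (volume : Measure ℝ) := by
    intro s hs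
    have := hle s
    rw [hs, mul_zero] at this
    exact le_antisymm this zero_le
  refine ⟨hac, ?_⟩
  apply ae_le_of_forall_setLIntegral_le_of_sigmaFinite (Measure.measurable_rnDeriv ν volume)
  intro s hs _
  rw [Measure.setLIntegral_rnDeriv hac, setLIntegral_const]
  simpa [mul_comm] using hle s
end
end

section
/- Fix n ≥ 1 and arbitrary real numbers a_0, a_1, …, a_n (a deterministic statement). Then Q_{2n}·C_{2n}·Q_{2n} is the 2n×2n block matrix whose top-left n×n block equals T_n° and whose remaining three blocks are zero; that is, (Q_{2n}·C_{2n}·Q_{2n})_{jk} = (T_n°)_{jk} for 0 ≤ j,k ≤ n−1 and (Q_{2n}·C_{2n}·Q_{2n})_{jk} = 0 otherwise. -/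
open Matrix

noncomputable section

/-- The modified symmetric Toeplitz matrix `T_n°`. -/
def toeplitzMod (n : ℕ) (a : ℕ → ℝ) : Matrix (Fin n) (Fin n) ℝ :=
  Matrix.of fun j k => if j = k then Real.sqrt 2 * a 0 else a ((j : ℤ) - (k : ℤ)).natAbs

/-- The sequence `b` of the circulant embedding. -/
def bseq (n : ℕ) (a : ℕ → ℝ) (j : ℕ) : ℝ :=
  if j = 0 then Real.sqrt 2 * a 0
  else if j = n then Real.sqrt 2 * a n
  else if j < n then a j
  else a (2 * n - j)

/-- The `2n × 2n` real circulant matrix `C_{2n}(j,k) = b_{(j-k) mod 2n}`. -/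
def circulantMatR (n : ℕ) (a : ℕ → ℝ) : Matrix (Fin (2 * n)) (Fin (2 * n)) ℝ :=
  Matrix.of fun j k => bseq n a ((((j : ℤ) - (k : ℤ)) % (2 * n : ℤ)).toNat)

/-- The projection `Q_{2n}` on the first `n` coordinates (real version). -/
def qMatR (n : ℕ) : Matrix (Fin (2 * n)) (Fin (2 * n)) ℝ :=
  Matrix.diagonal fun j => if (j : ℕ) < n then 1 else 0

/-- `Q_{2n} C_{2n} Q_{2n}` has top-left `n × n` block `T_n°` and the
remaining three blocks zero. -/
theorem qMat_circulant_qMat_eq_toeplitz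
    (n : ℕ) (hn : 1 ≤ n) (a : ℕ → ℝ) :
    ∀ j k : Fin (2 * n),
      (qMatR n * circulantMatR n a * qMatR n) j k =
        if h : (j : ℕ) < n ∧ (k : ℕ) < n
        then toeplitzMod n a ⟨j, h.1⟩ ⟨k, h.2⟩
        else 0 := by
  intro j k
  have hentry : (qMatR n * circulantMatR n a * qMatR n) j k =
      (if (j : ℕ) < n then (1:ℝ) else 0) * circulantMatR n a j k
        * (if (k : ℕ) < n then (1:ℝ) else 0) := by
    rw [qMatR, Matrix.mul_diagonal, Matrix.diagonal_mul]
  by_cases hj : (j : ℕ) < n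
  · by_cases hk : (k : ℕ) < n
    · rw [hentry, if_pos hj, if_pos hk, dif_pos ⟨hj, hk⟩, one_mul, mul_one]
      unfold circulantMatR toeplitzMod bseq
      simp only [Matrix.of_apply, Fin.mk.injEq]
      rcases le_or_gt (k : ℕ) (j : ℕ) with h | h
      · have hjk : (j : ℤ) - (k : ℤ) = (((j : ℕ) - (k : ℕ) : ℕ) : ℤ) := by
          omega
        have h1 : (((j : ℤ) - (k : ℤ)) % (2 * n : ℤ)).toNat = (j : ℕ) - (k : ℕ) := by
          rw [hjk, Int.emod_eq_of_lt (by positivity) (by exact_mod_cast (by omega : (j:ℕ) - (k:ℕ) < 2*n))]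
          simp
        rw [h1]
        by_cases h0 : (j : ℕ) - (k : ℕ) = 0
        · rw [if_pos h0, if_pos (by omega : (j:ℕ) = (k:ℕ))]
        · rw [if_neg h0, if_neg (by omega : ¬ (j:ℕ) - (k:ℕ) = n),
            if_pos (by omega : (j:ℕ) - (k:ℕ) < n), if_neg (by omega : ¬ (j:ℕ) = (k:ℕ))]
          congr 1
          omega
      · have hjk : (j : ℤ) - (k : ℤ) = ((2*n - ((k : ℕ) - (j : ℕ)) : ℕ) : ℤ) - 2*n := by
          omega
        have h1 : (((j : ℤ) - (k : ℤ)) % (2 * n : ℤ)).toNat = 2*n - ((k : ℕ) - (j : ℕ)) := by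
          rw [hjk, Int.sub_emod, Int.emod_self, sub_zero, Int.emod_emod_of_dvd _ dvd_rfl,
            Int.emod_eq_of_lt (by exact_mod_cast (by omega : (0:ℕ) ≤ 2*n - ((k:ℕ) - (j:ℕ))))
              (by exact_mod_cast (by omega : 2*n - ((k:ℕ) - (j:ℕ)) < 2*n))]
          simp
        rw [h1, if_neg (by omega), if_neg (by omega), if_neg (by omega),
          if_neg (by omega : ¬ (j:ℕ) = (k:ℕ))]
        congr 1
        omega
    · rw [hentry, if_neg hk, mul_zero, dif_neg (by tauto)]
  · rw [hentry, if_neg hj, zero_mul, zero_mul, dif_neg (by tauto)]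

end
end

section
/- For every λ ∈ ℝ, E ∈ ℝ, δ > 0 and ε > 0, the matrix H_λ − E·I + iδ·I + iε·V is invertible; and, writing K = B·(H_λ − E·I + iδ·I + iε·V)^{-1}·B, for every φ ∈ ℂ^m with ‖φ‖ = 1 one has ‖K·φ‖ ≥ −Im⟨φ, K·φ⟩ ≥ c_0·ε·‖K·φ‖². In particular ‖K·φ‖ ≤ (c_0·ε)^{-1} and |⟨φ, K·φ⟩| ≤ (c_0·ε)^{-1}. -/
open Matrix MeasureTheory
open scoped ComplexOrder

noncomputable section

/-- The regularized matrix `H_λ - E·I + iδ·I + iε·V` where `H_λ = H0 + λV`. -/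
def regMat (m : ℕ) (H0 V : Matrix (Fin m) (Fin m) ℂ) (E lam eps del : ℝ) :
    Matrix (Fin m) (Fin m) ℂ :=
  H0 + (lam : ℂ) • V - (E : ℂ) • 1 + (Complex.I * (del : ℂ)) • 1 + (Complex.I * (eps : ℂ)) • V

/-- `K(λ, ε, δ) = B (H_λ - E + iδ + iεV)⁻¹ B`. -/
def kMat (m : ℕ) (H0 V B : Matrix (Fin m) (Fin m) ℂ) (E lam eps del : ℝ) :
    Matrix (Fin m) (Fin m) ℂ :=
  B * (regMat m H0 V E lam eps del)⁻¹ * B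

/-- `F(ε, δ) = ∫ g(λ) ⟨φ, K(λ, ε, δ) φ⟩ dλ`. -/
def Fval (m : ℕ) (H0 V B : Matrix (Fin m) (Fin m) ℂ) (E : ℝ) (g : ℝ → ℝ)
    (φ : Fin m → ℂ) (eps del : ℝ) : ℂ :=
  ∫ lam : ℝ, (g lam : ℂ) * (star φ ⬝ᵥ (kMat m H0 V B E lam eps del).mulVec φ)

/-- `⟨w, w⟩ = ∑ ‖w i‖²` as a complex number. -/
lemma aux_dot_star_self {m : ℕ} (w : Fin m → ℂ) :
    star w ⬝ᵥ w = ((∑ i, ‖w i‖ ^ 2 : ℝ) : ℂ) := by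
  simp only [dotProduct, Pi.star_apply, RCLike.star_def]
  push_cast
  refine Finset.sum_congr rfl fun i _ => ?_
  rw [mul_comm, Complex.mul_conj, Complex.normSq_eq_norm_sq]
  push_cast; ring

/-- Hermitian quadratic forms are real. -/
lemma aux_herm_im {m : ℕ} {M : Matrix (Fin m) (Fin m) ℂ} (hM : M.IsHermitian)
    (x : Fin m → ℂ) : (star x ⬝ᵥ M *ᵥ x).im = 0 := by
  have : star (star x ⬝ᵥ M *ᵥ x) = star x ⬝ᵥ M *ᵥ x := by
    rw [← star_dotProduct, star_mulVec, ← dotProduct_mulVec, hM.eq]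
  exact Complex.conj_eq_iff_im.mp this

/-- Imaginary part of the quadratic form of the regularized matrix. -/
lemma aux_reg_im {m : ℕ} {H0 V : Matrix (Fin m) (Fin m) ℂ}
    (hH0 : H0.IsHermitian) (hV : V.IsHermitian) (E lam eps del : ℝ) (x : Fin m → ℂ) :
    (star x ⬝ᵥ (regMat m H0 V E lam eps del) *ᵥ x).im
      = del * (∑ i, ‖x i‖ ^ 2) + eps * (star x ⬝ᵥ V *ᵥ x).re := by
  have h0 := aux_herm_im hH0 x
  have hv := aux_herm_im hV x
  simp only [regMat, add_mulVec, sub_mulVec, smul_mulVec, one_mulVec,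
    dotProduct_add, dotProduct_sub, dotProduct_smul, smul_eq_mul,
    aux_dot_star_self x]
  simp only [Complex.add_im, Complex.sub_im, Complex.mul_im, Complex.mul_re, h0, hv,
    Complex.I_re, Complex.I_im, Complex.ofReal_re, Complex.ofReal_im,
    ← Complex.ofReal_pow, ← Complex.ofReal_sum]
  ring

/-- The quadratic form of `V` dominates `c0 ‖Bx‖²`. -/
lemma aux_V_lower {m : ℕ} {V B : Matrix (Fin m) (Fin m) ℂ} (hB : B.PosSemidef)
    {c0 : ℝ} (hVB : (V - (c0 : ℂ) • (B * B)).PosSemidef) (x : Fin m → ℂ) :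
    c0 * (∑ i, ‖(B *ᵥ x) i‖ ^ 2) ≤ (star x ⬝ᵥ V *ᵥ x).re := by
  have h := hVB.re_dotProduct_nonneg x
  have hBx : star x ᵥ* B = star (B *ᵥ x) := by rw [star_mulVec, hB.1.eq]
  have hexp : star x ⬝ᵥ ((V - (c0 : ℂ) • (B * B)) *ᵥ x)
      = star x ⬝ᵥ (V *ᵥ x) - (c0 : ℂ) * ((∑ i, ‖(B *ᵥ x) i‖ ^ 2 : ℝ) : ℂ) := by
    have hq : star x ⬝ᵥ (B * B) *ᵥ x = ((∑ i, ‖(B *ᵥ x) i‖ ^ 2 : ℝ) : ℂ) := by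
      rw [← mulVec_mulVec, dotProduct_mulVec, hBx, aux_dot_star_self]
    rw [sub_mulVec, dotProduct_sub, smul_mulVec, dotProduct_smul, smul_eq_mul, hq]
  rw [hexp] at h
  simp only [RCLike.re_to_complex, Complex.sub_re, Complex.mul_re, Complex.ofReal_re,
    Complex.ofReal_im, mul_zero, sub_zero] at h
  linarith [h]

/-- Cauchy–Schwarz for the dot product on `Fin m → ℂ`. -/
lemma aux_CS {m : ℕ} (φ w : Fin m → ℂ) :
    ‖star φ ⬝ᵥ w‖
      ≤ Real.sqrt (∑ i, ‖φ i‖ ^ 2) * Real.sqrt (∑ i, ‖w i‖ ^ 2) := by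
  let φ' : EuclideanSpace ℂ (Fin m) := WithLp.toLp 2 φ
  let w' : EuclideanSpace ℂ (Fin m) := WithLp.toLp 2 w
  have h1 : star φ ⬝ᵥ w = inner ℂ φ' w' := by
    simp [dotProduct, PiLp.inner_apply, RCLike.inner_apply, φ', w', mul_comm]
  have h2 := norm_inner_le_norm (𝕜 := ℂ) φ' w'
  rw [← h1] at h2
  rw [EuclideanSpace.norm_eq, EuclideanSpace.norm_eq] at h2
  simpa using h2

/-- `H_λ - E + iδ + iεV` is invertible, and with
`K = B (H_λ - E + iδ + iεV)⁻¹ B`, for unit vectors `φ` one has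
`‖Kφ‖ ≥ -Im⟨φ, Kφ⟩ ≥ c0 ε ‖Kφ‖²`, hence `‖Kφ‖ ≤ (c0 ε)⁻¹` and `|⟨φ, Kφ⟩| ≤ (c0 ε)⁻¹`. -/
theorem regMat_invertible_and_apriori_bound
    (m : ℕ) (hm : 1 ≤ m) (H0 V B : Matrix (Fin m) (Fin m) ℂ)
    (hH0 : H0.IsHermitian) (hV : V.IsHermitian) (hB : B.PosSemidef)
    (c0 : ℝ) (hc0 : 0 < c0) (hVB : (V - (c0 : ℂ) • (B * B)).PosSemidef)
    (lam E : ℝ) (del eps : ℝ) (hdel : 0 < del) (heps : 0 < eps) :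
    IsUnit (regMat m H0 V E lam eps del) ∧
    ∀ φ : Fin m → ℂ, (∑ i, ‖φ i‖ ^ 2) = 1 →
      (-(star φ ⬝ᵥ (kMat m H0 V B E lam eps del).mulVec φ).im ≤
          Real.sqrt (∑ i, ‖(kMat m H0 V B E lam eps del).mulVec φ i‖ ^ 2)) ∧
      (c0 * eps * (∑ i, ‖(kMat m H0 V B E lam eps del).mulVec φ i‖ ^ 2) ≤
          -(star φ ⬝ᵥ (kMat m H0 V B E lam eps del).mulVec φ).im) ∧
      (Real.sqrt (∑ i, ‖(kMat m H0 V B E lam eps del).mulVec φ i‖ ^ 2) ≤ (c0 * eps)⁻¹) ∧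
      (‖star φ ⬝ᵥ (kMat m H0 V B E lam eps del).mulVec φ‖ ≤ (c0 * eps)⁻¹) := by
  set A := regMat m H0 V E lam eps del with hA
  -- invertibility
  have hdet : A.det ≠ 0 := by
    intro h
    obtain ⟨v, hv0, hAv⟩ := Matrix.exists_mulVec_eq_zero_iff.mpr h
    have him : (star v ⬝ᵥ A *ᵥ v).im = 0 := by rw [hAv]; simp
    rw [hA, aux_reg_im hH0 hV] at him
    have hn : 0 < ∑ i, ‖v i‖ ^ 2 := by
      obtain ⟨i, hi⟩ := Function.ne_iff.mp hv0
      refine Finset.sum_pos' (fun j _ => by positivity) ⟨i, Finset.mem_univ i, ?_⟩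
      have := norm_pos_iff.mpr hi
      positivity
    have hv2 : 0 ≤ (star v ⬝ᵥ V *ᵥ v).re := by
      refine le_trans ?_ (aux_V_lower hB hVB v)
      positivity
    nlinarith
  have hunit : IsUnit A := (Matrix.isUnit_iff_isUnit_det A).mpr (isUnit_iff_ne_zero.mpr hdet)
  refine ⟨hunit, fun φ hφ => ?_⟩
  set ψ := A⁻¹ *ᵥ (B *ᵥ φ) with hψ
  have hAψ : A *ᵥ ψ = B *ᵥ φ := by
    rw [hψ, mulVec_mulVec, Matrix.mul_nonsing_inv _ (isUnit_iff_ne_zero.mpr hdet), one_mulVec]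
  have hK : (kMat m H0 V B E lam eps del).mulVec φ = B *ᵥ ψ := by
    simp [kMat, hψ, ← hA, ← mulVec_mulVec]
  have hform : star φ ⬝ᵥ (kMat m H0 V B E lam eps del).mulVec φ
      = star (star ψ ⬝ᵥ A *ᵥ ψ) := by
    rw [hK, dotProduct_mulVec, show star φ ᵥ* B = star (B *ᵥ φ) by rw [star_mulVec, hB.1.eq],
      ← hAψ, star_dotProduct]
  set S := ∑ i, ‖(kMat m H0 V B E lam eps del).mulVec φ i‖ ^ 2 with hS
  have hS0 : 0 ≤ S := by positivity
  have hSψ : S = ∑ i, ‖(B *ᵥ ψ) i‖ ^ 2 := by rw [hS, hK]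
  have him : -(star φ ⬝ᵥ (kMat m H0 V B E lam eps del).mulVec φ).im
      = del * (∑ i, ‖ψ i‖ ^ 2) + eps * (star ψ ⬝ᵥ V *ᵥ ψ).re := by
    rw [hform, Complex.star_def, Complex.conj_im, neg_neg, hA, aux_reg_im hH0 hV]
  have hlow : c0 * S ≤ (star ψ ⬝ᵥ V *ᵥ ψ).re := by
    rw [hSψ]; exact aux_V_lower hB hVB ψ
  have hψn : 0 ≤ ∑ i, ‖ψ i‖ ^ 2 := by positivity
  -- part 2
  have part2 : c0 * eps * S ≤ -(star φ ⬝ᵥ (kMat m H0 V B E lam eps del).mulVec φ).im := by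
    rw [him]; nlinarith
  -- part 1
  have habs : ‖star φ ⬝ᵥ (kMat m H0 V B E lam eps del).mulVec φ‖
      ≤ Real.sqrt S := by
    have := aux_CS φ ((kMat m H0 V B E lam eps del).mulVec φ)
    rwa [hφ, Real.sqrt_one, one_mul] at this
  have part1 : -(star φ ⬝ᵥ (kMat m H0 V B E lam eps del).mulVec φ).im ≤ Real.sqrt S := by
    refine le_trans ?_ habs
    calc -(star φ ⬝ᵥ (kMat m H0 V B E lam eps del).mulVec φ).im
        ≤ |(star φ ⬝ᵥ (kMat m H0 V B E lam eps del).mulVec φ).im| := neg_le_abs _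
      _ ≤ _ := Complex.abs_im_le_norm _
  -- part 3
  have part3 : Real.sqrt S ≤ (c0 * eps)⁻¹ := by
    have hsq : Real.sqrt S ^ 2 = S := Real.sq_sqrt hS0
    have hs0 : 0 ≤ Real.sqrt S := Real.sqrt_nonneg _
    have hce : 0 < c0 * eps := mul_pos hc0 heps
    have hchain : c0 * eps * Real.sqrt S * Real.sqrt S ≤ Real.sqrt S := by
      have := le_trans part2 part1
      nlinarith [hsq]
    rcases eq_or_lt_of_le hs0 with h | h
    · rw [← h]; positivity
    · have h1 : c0 * eps * Real.sqrt S ≤ 1 := by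
        have := le_of_mul_le_mul_right (by linarith [hchain] : c0 * eps * Real.sqrt S * Real.sqrt S ≤ 1 * Real.sqrt S) h
        linarith
      have h2 : c0 * eps * Real.sqrt S ≤ c0 * eps * (c0 * eps)⁻¹ := by
        rw [mul_inv_cancel₀ hce.ne']; exact h1
      exact le_of_mul_le_mul_left h2 hce
  exact ⟨part1, part2, part3, le_trans habs part3⟩

end
end

section
/- Let g: ℝ → ℝ be integrable and let φ ∈ ℂ^m with ‖φ‖ = 1. Then for every E ∈ ℝ, ε > 0 and δ > 0, |F(ε, δ)| ≤ (ε·c_0)^{-1}·‖g‖_{L¹}. -/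
open Matrix MeasureTheory
open scoped ComplexOrder

noncomputable section

namespace FvalAux

variable {m : ℕ}

lemma dot_star_self (x : Fin m → ℂ) : star x ⬝ᵥ x = ((∑ i, ‖x i‖ ^ 2 : ℝ) : ℂ) := by
  push_cast
  simp only [dotProduct, Pi.star_apply, Complex.star_def]
  exact Finset.sum_congr rfl fun i _ => Complex.conj_mul' (x i)

lemma im_herm {C : Matrix (Fin m) (Fin m) ℂ} (hC : C.IsHermitian) (x : Fin m → ℂ) :
    (star x ⬝ᵥ C *ᵥ x).im = 0 := by
  rw [← Complex.conj_eq_iff_im]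
  calc (starRingEnd ℂ) (star x ⬝ᵥ C *ᵥ x) = star (star x ⬝ᵥ C *ᵥ x) := rfl
    _ = star (C *ᵥ x) ⬝ᵥ x := (star_dotProduct _ _).symm
    _ = (star x ᵥ* Cᴴ) ⬝ᵥ x := by rw [star_mulVec]
    _ = star x ⬝ᵥ Cᴴ *ᵥ x := (dotProduct_mulVec _ _ _).symm
    _ = star x ⬝ᵥ C *ᵥ x := by rw [hC.eq]

lemma re_nonneg_of_psd {C : Matrix (Fin m) (Fin m) ℂ} (hC : C.PosSemidef) (x : Fin m → ℂ) :
    0 ≤ (star x ⬝ᵥ C *ᵥ x).re := by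
  have := hC.dotProduct_mulVec_nonneg x
  rw [Complex.le_def] at this
  simpa using this.1

set_option maxHeartbeats 1000000 in
/-- Pointwise bound on the sesquilinear form of `kMat`. -/
lemma key (m : ℕ) (H0 V B : Matrix (Fin m) (Fin m) ℂ)
    (hH0 : H0.IsHermitian) (hV : V.IsHermitian) (hB : B.PosSemidef)
    (c0 : ℝ) (hc0 : 0 < c0) (hVB : (V - (c0 : ℂ) • (B * B)).PosSemidef)
    (φ : Fin m → ℂ) (hφ : (∑ i, ‖φ i‖ ^ 2) = 1)
    (E lam eps del : ℝ) (heps : 0 < eps) (hdel : 0 < del) :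
    ‖star φ ⬝ᵥ (kMat m H0 V B E lam eps del).mulVec φ‖ ≤ (eps * c0)⁻¹ := by
  set A := regMat m H0 V E lam eps del with hA
  -- quadratic form expansion
  have hquad : ∀ x : Fin m → ℂ, star x ⬝ᵥ A *ᵥ x
      = star x ⬝ᵥ H0 *ᵥ x + (lam : ℂ) * (star x ⬝ᵥ V *ᵥ x) - (E : ℂ) * (star x ⬝ᵥ x)
        + Complex.I * (del : ℂ) * (star x ⬝ᵥ x)
        + Complex.I * (eps : ℂ) * (star x ⬝ᵥ V *ᵥ x) := by
    intro x
    simp only [hA, regMat, add_mulVec, sub_mulVec, smul_mulVec, one_mulVec,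
      dotProduct_add, dotProduct_sub, dotProduct_smul, smul_eq_mul]
  have hqB2 : ∀ x : Fin m → ℂ, star x ⬝ᵥ (B * B) *ᵥ x = star (B *ᵥ x) ⬝ᵥ (B *ᵥ x) := by
    intro x
    rw [← mulVec_mulVec, dotProduct_mulVec, star_mulVec, hB.1]
  have hqVre : ∀ x : Fin m → ℂ,
      c0 * (∑ i, ‖(B *ᵥ x) i‖ ^ 2) ≤ (star x ⬝ᵥ V *ᵥ x).re := by
    intro x
    have h := re_nonneg_of_psd hVB x
    have hexp : star x ⬝ᵥ (V - (c0 : ℂ) • (B * B)) *ᵥ x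
        = star x ⬝ᵥ V *ᵥ x - (c0 : ℂ) * (star x ⬝ᵥ (B * B) *ᵥ x) := by
      simp only [sub_mulVec, smul_mulVec, dotProduct_sub, dotProduct_smul, smul_eq_mul]
    rw [hexp, hqB2, dot_star_self] at h
    simp only [Complex.sub_re, Complex.mul_re, Complex.ofReal_re, Complex.ofReal_im,
      mul_zero, zero_mul, sub_zero] at h
    linarith
  have him : ∀ x : Fin m → ℂ, (star x ⬝ᵥ A *ᵥ x).im
      = del * (∑ i, ‖x i‖ ^ 2) + eps * (star x ⬝ᵥ V *ᵥ x).re := by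
    intro x
    rw [hquad x, dot_star_self]
    have h0 := im_herm hH0 x
    have hv := im_herm hV x
    simp only [Complex.add_im, Complex.sub_im, Complex.mul_im, Complex.mul_re,
      Complex.I_re, Complex.I_im, Complex.ofReal_re, Complex.ofReal_im, h0, hv]
    ring
  -- invertibility
  have hU : IsUnit A := by
    rw [← mulVec_injective_iff_isUnit]
    intro x y hxy
    by_contra hne
    have hz : A *ᵥ (x - y) = 0 := by
      rw [mulVec_sub, hxy, sub_self]
    have hz0 : x - y ≠ 0 := sub_ne_zero.mpr hne
    obtain ⟨i, hi⟩ := Function.ne_iff.mp hz0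
    have hi' : (x - y) i ≠ 0 := by simpa using hi
    have hsum : 0 < ∑ j, ‖(x - y) j‖ ^ 2 := by
      refine Finset.sum_pos' (fun j _ => sq_nonneg _) ⟨i, Finset.mem_univ i, pow_pos (norm_pos_iff.mpr hi') 2⟩
    have h1 : (star (x - y) ⬝ᵥ A *ᵥ (x - y)).im = 0 := by
      rw [hz]; simp
    have h2 := him (x - y)
    have h3 : c0 * (∑ j, ‖(B *ᵥ (x - y)) j‖ ^ 2) ≤ (star (x - y) ⬝ᵥ V *ᵥ (x - y)).re :=
      hqVre (x - y)
    have h4 : (0:ℝ) ≤ ∑ j, ‖(B *ᵥ (x - y)) j‖ ^ 2 := Finset.sum_nonneg fun j _ => sq_nonneg _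
    have h5 : (0:ℝ) ≤ (star (x - y) ⬝ᵥ V *ᵥ (x - y)).re :=
      le_trans (mul_nonneg hc0.le h4) h3
    nlinarith [mul_pos hdel hsum, mul_nonneg heps.le h5]
  have hinv : A * A⁻¹ = 1 := mul_nonsing_inv A ((isUnit_iff_isUnit_det A).mp hU)
  set ψ := A⁻¹ *ᵥ (B *ᵥ φ) with hψ
  have hAψ : A *ᵥ ψ = B *ᵥ φ := by
    rw [hψ, mulVec_mulVec, hinv, one_mulVec]
  have hker : star φ ⬝ᵥ (kMat m H0 V B E lam eps del) *ᵥ φ = star φ ⬝ᵥ (B *ᵥ ψ) := by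
    rw [kMat, ← hA, ← mulVec_mulVec, ← mulVec_mulVec, hψ]
  have hval : star φ ⬝ᵥ (B *ᵥ ψ) = star (star ψ ⬝ᵥ A *ᵥ ψ) := by
    calc star φ ⬝ᵥ B *ᵥ ψ = (star φ ᵥ* B) ⬝ᵥ ψ := dotProduct_mulVec _ _ _
      _ = star (B *ᵥ φ) ⬝ᵥ ψ := by rw [star_mulVec, hB.1]
      _ = star (A *ᵥ ψ) ⬝ᵥ ψ := by rw [hAψ]
      _ = star (star ψ ⬝ᵥ A *ᵥ ψ) := star_dotProduct _ _
  rw [hker]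
  have habs : ‖star φ ⬝ᵥ B *ᵥ ψ‖ = ‖star ψ ⬝ᵥ A *ᵥ ψ‖ := by
    rw [hval]; exact Complex.norm_conj _
  have himψ := him ψ
  have hqVψ := hqVre ψ
  clear hval hker hAψ hquad him hqVre hqB2 hinv hU hψ hA
  clear_value ψ A
  have hs0' : (0:ℝ) ≤ ∑ i, ‖(B *ᵥ ψ) i‖ ^ 2 := Finset.sum_nonneg fun i _ => sq_nonneg _
  set s := ∑ i, ‖(B *ᵥ ψ) i‖ ^ 2 with hs
  have hs0 : (0:ℝ) ≤ s := hs0'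
  set t := ‖star φ ⬝ᵥ B *ᵥ ψ‖ with ht
  -- lower bound
  have hlow : eps * c0 * s ≤ t := by
    rw [habs]
    have h5 : (0:ℝ) ≤ ∑ i, ‖ψ i‖ ^ 2 := Finset.sum_nonneg fun i _ => sq_nonneg _
    calc eps * c0 * s ≤ del * (∑ i, ‖ψ i‖ ^ 2) + eps * (star ψ ⬝ᵥ V *ᵥ ψ).re := by
          nlinarith [mul_nonneg hdel.le h5, mul_le_mul_of_nonneg_left hqVψ heps.le]
      _ = (star ψ ⬝ᵥ A *ᵥ ψ).im := himψ.symm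
      _ ≤ |(star ψ ⬝ᵥ A *ᵥ ψ).im| := le_abs_self _
      _ ≤ ‖star ψ ⬝ᵥ A *ᵥ ψ‖ := Complex.abs_im_le_norm _
  -- upper bound (Cauchy-Schwarz)
  have hup : t ≤ Real.sqrt s := by
    have h := norm_inner_le_norm (𝕜 := ℂ)
      (WithLp.toLp 2 φ) (WithLp.toLp 2 (B *ᵥ ψ))
    rw [EuclideanSpace.inner_toLp_toLp, dotProduct_comm] at h
    have hnφ : ‖WithLp.toLp 2 φ‖ = 1 := by
      rw [EuclideanSpace.norm_eq]
      exact (congrArg Real.sqrt hφ).trans Real.sqrt_one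
    have hnB : ‖WithLp.toLp 2 (B *ᵥ ψ)‖ = Real.sqrt s := by
      rw [EuclideanSpace.norm_eq]
    rw [hnφ, hnB, one_mul] at h
    exact h
  -- conclude
  rcases eq_or_lt_of_le hs0 with hse | hsp
  · have hsq0 : Real.sqrt s = 0 := by rw [← hse, Real.sqrt_zero]
    have h0 : t ≤ 0 := hsq0 ▸ hup
    have : (0:ℝ) ≤ (eps * c0)⁻¹ := by positivity
    linarith
  · have hssqrt : Real.sqrt s * Real.sqrt s = s := Real.mul_self_sqrt hs0
    have hsq : 0 < Real.sqrt s := Real.sqrt_pos.mpr hsp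
    have hec : 0 < eps * c0 := by positivity
    have hn : eps * c0 * Real.sqrt s ≤ 1 := by nlinarith
    have hfin : Real.sqrt s ≤ (eps * c0)⁻¹ := by
      rw [inv_eq_one_div, le_div_iff₀ hec]
      nlinarith
    linarith

end FvalAux

/-- `|F(ε, δ)| ≤ (ε c0)⁻¹ ‖g‖₁` for all `E ∈ ℝ`, `ε > 0`, `δ > 0`. -/
theorem Fval_apriori_bound
    (m : ℕ) (hm : 1 ≤ m) (H0 V B : Matrix (Fin m) (Fin m) ℂ)
    (hH0 : H0.IsHermitian) (hV : V.IsHermitian) (hB : B.PosSemidef)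
    (c0 : ℝ) (hc0 : 0 < c0) (hVB : (V - (c0 : ℂ) • (B * B)).PosSemidef)
    (g : ℝ → ℝ) (hg1 : Integrable g)
    (φ : Fin m → ℂ) (hφ : (∑ i, ‖φ i‖ ^ 2) = 1)
    (E : ℝ) (eps del : ℝ) (heps : 0 < eps) (hdel : 0 < del) :
    ‖Fval m H0 V B E g φ eps del‖ ≤ (eps * c0)⁻¹ * ∫ x, |g x| := by
  have hkey : ∀ lam : ℝ,
      ‖star φ ⬝ᵥ (kMat m H0 V B E lam eps del).mulVec φ‖ ≤ (eps * c0)⁻¹ :=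
    fun lam => FvalAux.key m H0 V B hH0 hV hB c0 hc0 hVB φ hφ E lam eps del heps hdel
  have hnn : (0:ℝ) ≤ (eps * c0)⁻¹ := by positivity
  unfold Fval
  calc ‖∫ lam : ℝ, (g lam : ℂ) * (star φ ⬝ᵥ (kMat m H0 V B E lam eps del).mulVec φ)‖
      ≤ ∫ lam : ℝ, ‖(g lam : ℂ) * (star φ ⬝ᵥ (kMat m H0 V B E lam eps del).mulVec φ)‖ :=
        norm_integral_le_integral_norm _
    _ ≤ ∫ lam : ℝ, (eps * c0)⁻¹ * |g lam| := by
        refine integral_mono_of_nonneg (Filter.Eventually.of_forall fun l => norm_nonneg _)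
          ((hg1.abs).const_mul _) (Filter.Eventually.of_forall fun l => ?_)
        dsimp only
        rw [norm_mul, Complex.norm_real, Real.norm_eq_abs, mul_comm]
        exact mul_le_mul_of_nonneg_right (hkey l) (abs_nonneg _)
    _ = (eps * c0)⁻¹ * ∫ x, |g x| := integral_const_mul _ _


end
end

section
/- Let g: ℝ → ℝ be continuously differentiable with g, g' ∈ L¹(ℝ), and let φ ∈ ℂ^m with ‖φ‖ = 1. Then for every E ∈ ℝ and δ > 0, the function ε ↦ F(ε, δ) is differentiable on (0, ∞), it satisfies i·(d/dε)F(ε, δ) = ∫_ℝ g'(λ)·⟨φ, K(λ, ε, δ)·φ⟩ dλ, and consequently |(d/dε)F(ε, δ)| ≤ (ε·c_0)^{-1}·‖g'‖_{L¹} for all ε > 0. -/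
open Matrix MeasureTheory
open scoped ComplexOrder
open Metric

noncomputable section

namespace Aux14

attribute [local instance] Matrix.linftyOpNormedAddCommGroup Matrix.linftyOpNormedRing
  Matrix.linftyOpNormedAlgebra Matrix.linftyOpNormedSpace

variable {m : ℕ}

/-- view a vector as an element of Euclidean space -/
def eV (x : Fin m → ℂ) : EuclideanSpace ℂ (Fin m) := (WithLp.equiv 2 _).symm x

lemma inner_eV (x y : Fin m → ℂ) : (inner ℂ (eV x) (eV y) : ℂ) = star x ⬝ᵥ y :=
  by rw [dotProduct_comm]; exact EuclideanSpace.inner_toLp_toLp x y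

lemma norm_eV_sq (x : Fin m → ℂ) : ‖eV x‖ ^ 2 = ∑ i, ‖x i‖ ^ 2 := by
  rw [EuclideanSpace.norm_eq]
  rw [Real.sq_sqrt]
  · rfl
  · positivity

lemma dot_star_self (x : Fin m → ℂ) : star x ⬝ᵥ x = ((∑ i, ‖x i‖ ^ 2 : ℝ) : ℂ) := by
  rw [← inner_eV, inner_self_eq_norm_sq_to_K (𝕜 := ℂ), ← norm_eV_sq]
  norm_cast

lemma herm_im (A : Matrix (Fin m) (Fin m) ℂ) (hA : A.IsHermitian) (x : Fin m → ℂ) :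
    (star x ⬝ᵥ A *ᵥ x).im = 0 := by
  have h : star (star x ⬝ᵥ A *ᵥ x) = star x ⬝ᵥ A *ᵥ x := by
    rw [← star_dotProduct, star_mulVec, ← dotProduct_mulVec, hA.eq]
  have h2 := congrArg Complex.im h
  simp only [Complex.star_def, Complex.conj_im] at h2
  linarith

lemma psd_re (A : Matrix (Fin m) (Fin m) ℂ) (hA : A.PosSemidef) (x : Fin m → ℂ) :
    0 ≤ (star x ⬝ᵥ A *ᵥ x).re := by
  have := hA.dotProduct_mulVec_nonneg x
  rw [Complex.le_def] at this
  exact this.1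

section Main

variable (H0 V B : Matrix (Fin m) (Fin m) ℂ)
  (c0 : ℝ) (E del : ℝ)

lemma hVpsd (hB : B.PosSemidef) (hc0 : 0 < c0)
    (hVB : (V - (c0 : ℂ) • (B * B)).PosSemidef) : V.PosSemidef := by
  have hBB : (B * B).PosSemidef := by
    have := Matrix.posSemidef_conjTranspose_mul_self B
    rwa [hB.1.eq] at this
  have h1 : ((c0 : ℂ) • (B * B)).PosSemidef := by
    refine Matrix.PosSemidef.of_dotProduct_mulVec_nonneg ?_ (fun x => ?_)
    · unfold Matrix.IsHermitian
      rw [conjTranspose_smul, hBB.1.eq]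
      congr 1
      simp [Complex.star_def]
    · rw [smul_mulVec, dotProduct_smul, smul_eq_mul]
      exact mul_nonneg (by exact_mod_cast hc0.le) (hBB.dotProduct_mulVec_nonneg x)
  have := hVB.add h1
  rwa [sub_add_cancel] at this

/-- imaginary part of the quadratic form of the regularized matrix -/
lemma regMat_im (hH0 : H0.IsHermitian) (hV : V.IsHermitian) (lam e : ℝ) (x : Fin m → ℂ) :
    (star x ⬝ᵥ (regMat m H0 V E lam e del) *ᵥ x).im
      = del * (∑ i, ‖x i‖ ^ 2) + e * (star x ⬝ᵥ V *ᵥ x).re := by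
  have hexp : star x ⬝ᵥ (regMat m H0 V E lam e del) *ᵥ x
      = (star x ⬝ᵥ H0 *ᵥ x) + (lam : ℂ) * (star x ⬝ᵥ V *ᵥ x)
        - (E : ℂ) * (star x ⬝ᵥ x) + (Complex.I * (del : ℂ)) * (star x ⬝ᵥ x)
        + (Complex.I * (e : ℂ)) * (star x ⬝ᵥ V *ᵥ x) := by
    simp [regMat, add_mulVec, sub_mulVec, smul_mulVec, one_mulVec,
      dotProduct_add, dotProduct_sub, dotProduct_smul, smul_eq_mul]
  rw [hexp, dot_star_self]
  simp only [Complex.add_im, Complex.sub_im, Complex.mul_im, Complex.mul_re,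
    Complex.I_re, Complex.I_im, Complex.ofReal_re, Complex.ofReal_im,
    herm_im H0 hH0 x, herm_im V hV x]
  ring

lemma regMat_isUnit (hH0 : H0.IsHermitian) (hV : V.IsHermitian) (hVpsd : V.PosSemidef)
    (hdel : 0 < del) (lam e : ℝ) (he : 0 ≤ e) :
    IsUnit (regMat m H0 V E lam e del) := by
  rw [Matrix.isUnit_iff_isUnit_det, isUnit_iff_ne_zero]
  intro hdet
  obtain ⟨v, hv, hMv⟩ := (Matrix.exists_mulVec_eq_zero_iff).2 hdet
  have h1 := regMat_im H0 V E del hH0 hV lam e v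
  rw [hMv] at h1
  simp only [dotProduct_zero, Complex.zero_im] at h1
  have h2 : 0 < ∑ i, ‖v i‖ ^ 2 := by
    have : v ≠ 0 := hv
    obtain ⟨i, hi⟩ : ∃ i, v i ≠ 0 := Function.ne_iff.1 this
    have hp : 0 < ‖v i‖ ^ 2 := by
      have := norm_pos_iff.2 hi
      positivity
    exact Finset.sum_pos' (fun j _ => by positivity) ⟨i, Finset.mem_univ i, hp⟩
  have h3 := psd_re V hVpsd v
  nlinarith

lemma mulVec_eV_norm (A : Matrix (Fin m) (Fin m) ℂ) (x : Fin m → ℂ) :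
    ‖eV (A *ᵥ x)‖ ≤ ‖Matrix.toEuclideanCLM (𝕜 := ℂ) A‖ * ‖eV x‖ := by
  have h : eV (A *ᵥ x) = Matrix.toEuclideanCLM (𝕜 := ℂ) A (eV x) :=
    (Matrix.toEuclideanCLM_toLp A x).symm
  rw [h]
  exact ContinuousLinearMap.le_opNorm _ _

/-- resolvent bound in the Euclidean norm -/
lemma resolvent_bound (hH0 : H0.IsHermitian) (hV : V.IsHermitian) (hVpsd : V.PosSemidef)
    (hdel : 0 < del) (lam e : ℝ) (he : 0 ≤ e) (z : Fin m → ℂ) :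
    ‖eV ((regMat m H0 V E lam e del)⁻¹ *ᵥ z)‖ ≤ del⁻¹ * ‖eV z‖ := by
  set M := regMat m H0 V E lam e del with hM
  set y := M⁻¹ *ᵥ z with hy
  have hMy : M *ᵥ y = z := by
    rw [hy, Matrix.mulVec_mulVec, Matrix.mul_nonsing_inv _
      ((Matrix.isUnit_iff_isUnit_det _).1 (regMat_isUnit H0 V E del hH0 hV hVpsd hdel lam e he)),
      Matrix.one_mulVec]
  have h1 : del * ‖eV y‖ ^ 2 ≤ (star y ⬝ᵥ M *ᵥ y).im := by
    rw [hM, regMat_im H0 V E del hH0 hV lam e y, norm_eV_sq]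
    have := psd_re V hVpsd y
    nlinarith
  have h2 : (star y ⬝ᵥ M *ᵥ y).im ≤ ‖eV y‖ * ‖eV z‖ := by
    calc (star y ⬝ᵥ M *ᵥ y).im ≤ ‖star y ⬝ᵥ M *ᵥ y‖ := Complex.im_le_norm _
    _ = ‖(inner ℂ (eV y) (eV (M *ᵥ y)) : ℂ)‖ := by rw [inner_eV]
    _ ≤ ‖eV y‖ * ‖eV (M *ᵥ y)‖ := norm_inner_le_norm _ _
    _ = ‖eV y‖ * ‖eV z‖ := by rw [hMy]
  rcases eq_or_lt_of_le (norm_nonneg (eV y)) with h0 | h0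
  · rw [← h0]; positivity
  · have h3 : del * ‖eV y‖ ≤ ‖eV z‖ := by nlinarith
    rw [inv_mul_eq_div, le_div_iff₀ hdel, mul_comm]
    linarith

lemma quad_eq (hB : B.IsHermitian) (X : Matrix (Fin m) (Fin m) ℂ) (φ : Fin m → ℂ) :
    star φ ⬝ᵥ ((B * X * B) *ᵥ φ) = star (B *ᵥ φ) ⬝ᵥ (X *ᵥ (B *ᵥ φ)) := by
  rw [star_mulVec, hB.eq, ← Matrix.mulVec_mulVec, ← Matrix.mulVec_mulVec,
    dotProduct_mulVec (star φ) B]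

lemma star_dot_B (hB : B.IsHermitian) (u w : Fin m → ℂ) :
    star (B *ᵥ u) ⬝ᵥ w = star u ⬝ᵥ (B *ᵥ w) := by
  rw [star_mulVec, hB.eq, ← dotProduct_mulVec]

set_option maxHeartbeats 1000000 in
/-- The key bound `|⟨φ, K φ⟩| ≤ (ε c₀)⁻¹`. -/
lemma key_bound (hH0 : H0.IsHermitian) (hV : V.IsHermitian) (hB : B.PosSemidef)
    (hc0 : 0 < c0) (hVB : (V - (c0 : ℂ) • (B * B)).PosSemidef)
    (hdel : 0 < del) (φ : Fin m → ℂ) (hφ : (∑ i, ‖φ i‖ ^ 2) = 1)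
    (lam e : ℝ) (he : 0 < e) :
    ‖star φ ⬝ᵥ (kMat m H0 V B E lam e del) *ᵥ φ‖ ≤ (e * c0)⁻¹ := by
  have hVp := hVpsd V B c0 hB hc0 hVB
  set M := regMat m H0 V E lam e del with hMdef
  set ψ := B *ᵥ φ with hψ
  set y := M⁻¹ *ᵥ ψ with hy
  have hMy : M *ᵥ y = ψ := by
    rw [hy, Matrix.mulVec_mulVec, Matrix.mul_nonsing_inv _
      ((Matrix.isUnit_iff_isUnit_det _).1
        (regMat_isUnit H0 V E del hH0 hV hVp hdel lam e he.le)),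
      Matrix.one_mulVec]
  set t := star φ ⬝ᵥ (kMat m H0 V B E lam e del) *ᵥ φ with ht
  have ht2 : t = star ψ ⬝ᵥ y := by
    rw [ht, kMat, quad_eq B hB.1, ← hMdef, ← hψ, ← hy]
  clear_value M ψ y t
  set s := ‖eV (B *ᵥ y)‖ with hs
  clear_value s
  have hub : ‖t‖ ≤ s := by
    have : t = star φ ⬝ᵥ (B *ᵥ y) := by rw [ht2, hψ, star_dot_B B hB.1]
    rw [this]
    calc ‖star φ ⬝ᵥ (B *ᵥ y)‖ = ‖(inner ℂ (eV φ) (eV (B *ᵥ y)) : ℂ)‖ := by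
          rw [inner_eV]
    _ ≤ ‖eV φ‖ * ‖eV (B *ᵥ y)‖ := norm_inner_le_norm _ _
    _ = s := by
        have h1 : ‖eV φ‖ = 1 := by
          have := norm_eV_sq φ
          rw [hφ] at this
          nlinarith [norm_nonneg (eV φ)]
        rw [h1, one_mul, hs]
  have hlb : e * c0 * s ^ 2 ≤ ‖t‖ := by
    have hq : t = star (star y ⬝ᵥ (M *ᵥ y)) := by
      rw [ht2, ← hMy, star_dotProduct]
    have habs : ‖t‖ = ‖star y ⬝ᵥ (M *ᵥ y)‖ := by
      rw [hq, Complex.star_def, Complex.norm_conj]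
    have him : (star y ⬝ᵥ M *ᵥ y).im ≤ ‖star y ⬝ᵥ M *ᵥ y‖ := Complex.im_le_norm _
    have hform := regMat_im H0 V E del hH0 hV lam e y
    rw [← hMdef] at hform
    have hVc0 : c0 * (star y ⬝ᵥ (B * B) *ᵥ y).re ≤ (star y ⬝ᵥ V *ᵥ y).re := by
      have h1 := psd_re _ hVB y
      have hexp : star y ⬝ᵥ (V - (c0 : ℂ) • (B * B)) *ᵥ y
          = star y ⬝ᵥ V *ᵥ y - (c0 : ℂ) * (star y ⬝ᵥ (B * B) *ᵥ y) := by
        simp [sub_mulVec, smul_mulVec, dotProduct_sub, dotProduct_smul, smul_eq_mul]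
      rw [hexp] at h1
      simp only [Complex.sub_re, Complex.mul_re, Complex.ofReal_re, Complex.ofReal_im] at h1
      nlinarith
    have hBB : (star y ⬝ᵥ (B * B) *ᵥ y).re = s ^ 2 := by
      have : star y ⬝ᵥ (B * B) *ᵥ y = star (B *ᵥ y) ⬝ᵥ (B *ᵥ y) := by
        rw [← Matrix.mulVec_mulVec, ← star_dot_B B hB.1]
      rw [this, dot_star_self, hs, norm_eV_sq, Complex.ofReal_re]
    have hsum : 0 ≤ ∑ i, ‖y i‖ ^ 2 := Finset.sum_nonneg fun i _ => sq_nonneg _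
    rw [habs]
    have h5 : c0 * s ^ 2 ≤ (star y ⬝ᵥ V *ᵥ y).re := hBB ▸ hVc0
    calc e * c0 * s ^ 2 ≤ del * (∑ i, ‖y i‖ ^ 2) + e * (star y ⬝ᵥ V *ᵥ y).re := by
          nlinarith [mul_le_mul_of_nonneg_left h5 he.le, mul_nonneg hdel.le hsum]
    _ = (star y ⬝ᵥ M *ᵥ y).im := hform.symm
    _ ≤ ‖star y ⬝ᵥ M *ᵥ y‖ := him
  -- combine
  have hec : 0 < e * c0 := mul_pos he hc0
  have hs0 : 0 ≤ s := hs ▸ norm_nonneg _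
  have habs0 : 0 ≤ ‖t‖ := norm_nonneg t
  have h6 : e * c0 * s ≤ 1 := by
    nlinarith [sq_nonneg (e * c0 * s - 1), mul_le_mul_of_nonneg_left (hlb.trans hub) hec.le]
  have h7 : e * c0 * ‖t‖ ≤ 1 :=
    le_trans (by nlinarith [hub]) h6
  calc ‖t‖ = (e * c0)⁻¹ * (e * c0 * ‖t‖) := by
        field_simp
  _ ≤ (e * c0)⁻¹ * 1 := mul_le_mul_of_nonneg_left h7 (inv_nonneg.2 hec.le)
  _ = (e * c0)⁻¹ := mul_one _


/-- the quantity `⟨φ, B R V R B φ⟩` appearing in the derivative of `ε ↦ ⟨φ, K φ⟩`. -/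
def dK (φ : Fin m → ℂ) (lam e : ℝ) : ℂ :=
  star φ ⬝ᵥ ((B * ((regMat m H0 V E lam e del)⁻¹ * V * (regMat m H0 V E lam e del)⁻¹) * B) *ᵥ φ)

/-- bound for the derivative quantity -/
lemma dK_bound (hH0 : H0.IsHermitian) (hV : V.IsHermitian) (hVp : V.PosSemidef)
    (hBh : B.IsHermitian) (hdel : 0 < del) (φ : Fin m → ℂ) (lam e : ℝ) (he : 0 ≤ e) :
    ‖dK H0 V B E del φ lam e‖
      ≤ ‖eV (B *ᵥ φ)‖ ^ 2 * ‖Matrix.toEuclideanCLM (𝕜 := ℂ) V‖ * (del⁻¹ * del⁻¹) := by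
  have hRw : ∀ w, ‖eV ((regMat m H0 V E lam e del)⁻¹ *ᵥ w)‖ ≤ del⁻¹ * ‖eV w‖ :=
    fun w => resolvent_bound H0 V E del hH0 hV hVp hdel lam e he w
  have hVw : ∀ w : Fin m → ℂ,
      ‖eV (V *ᵥ w)‖ ≤ ‖Matrix.toEuclideanCLM (𝕜 := ℂ) V‖ * ‖eV w‖ := mulVec_eV_norm V
  set R := (regMat m H0 V E lam e del)⁻¹ with hR
  have h1 : dK H0 V B E del φ lam e
      = star (B *ᵥ φ) ⬝ᵥ (R *ᵥ (V *ᵥ (R *ᵥ (B *ᵥ φ)))) := by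
    rw [dK, quad_eq B hBh, ← hR]
    simp only [Matrix.mulVec_mulVec, Matrix.mul_assoc]
  set ψ := B *ᵥ φ with hψ
  rw [h1]
  calc ‖star ψ ⬝ᵥ (R *ᵥ (V *ᵥ (R *ᵥ ψ)))‖
      = ‖(inner ℂ (eV ψ) (eV (R *ᵥ (V *ᵥ (R *ᵥ ψ)))) : ℂ)‖ := by rw [inner_eV]
  _ ≤ ‖eV ψ‖ * ‖eV (R *ᵥ (V *ᵥ (R *ᵥ ψ)))‖ := norm_inner_le_norm _ _
  _ ≤ ‖eV ψ‖ * (del⁻¹ * (‖Matrix.toEuclideanCLM (𝕜 := ℂ) V‖ * (del⁻¹ * ‖eV ψ‖))) := by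
      refine mul_le_mul_of_nonneg_left ?_ (norm_nonneg _)
      refine (hRw _).trans (mul_le_mul_of_nonneg_left ?_ (inv_nonneg.2 hdel.le))
      exact (hVw _).trans (mul_le_mul_of_nonneg_left (hRw _) (norm_nonneg _))
  _ = ‖eV ψ‖ ^ 2 * ‖Matrix.toEuclideanCLM (𝕜 := ℂ) V‖ * (del⁻¹ * del⁻¹) := by ring

lemma hasDerivAt_ofReal' (x : ℝ) : HasDerivAt (fun t : ℝ => (t : ℂ)) 1 x := by
  simpa using (hasDerivAt_id x).ofReal_comp

lemma hasDerivAt_regMat_eps (lam e : ℝ) :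
    HasDerivAt (fun t => regMat m H0 V E lam t del) (Complex.I • V) e := by
  unfold regMat
  have h := (((hasDerivAt_ofReal' e).const_mul Complex.I).smul_const V).const_add
    (H0 + (lam : ℂ) • V - (E : ℂ) • 1 + (Complex.I * (del : ℂ)) • 1)
  exact h.congr_deriv (by simp)

lemma hasDerivAt_regMat_lam (lam e : ℝ) :
    HasDerivAt (fun s => regMat m H0 V E s e del) V lam := by
  unfold regMat
  have h := (((((hasDerivAt_ofReal' lam).smul_const V).const_add H0).sub_const
    ((E : ℂ) • 1)).add_const ((Complex.I * (del : ℂ)) • 1)).add_const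
    ((Complex.I * (e : ℂ)) • V)
  exact h.congr_deriv (by simp)

lemma hasDerivAt_inv_mat {u : ℝ → Matrix (Fin m) (Fin m) ℂ} {u' : Matrix (Fin m) (Fin m) ℂ}
    {t : ℝ} (hu : HasDerivAt u u' t) (hunit : IsUnit (u t)) :
    HasDerivAt (fun s => (u s)⁻¹) (-((u t)⁻¹ * u' * (u t)⁻¹)) t := by
  have h0 : (fun s => (u s)⁻¹) = fun s => Ring.inverse (u s) := by
    funext s; rw [Matrix.nonsing_inv_eq_ringInverse]
  rw [h0]
  have hcoe : ((hunit.unit⁻¹ : (Matrix (Fin m) (Fin m) ℂ)ˣ) : Matrix (Fin m) (Fin m) ℂ)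
      = (u t)⁻¹ := by
    rw [Matrix.coe_units_inv, hunit.unit_spec]
  have h1 := hasFDerivAt_ringInverse (𝕜 := ℝ) hunit.unit
  rw [hcoe] at h1
  rw [hunit.unit_spec] at h1
  have h2 := h1.comp_hasDerivAt t hu
  exact h2

/-- the quadratic-form linear functional `X ↦ ⟨φ, B X B φ⟩` -/
def qf (B : Matrix (Fin m) (Fin m) ℂ) (φ : Fin m → ℂ) : Matrix (Fin m) (Fin m) ℂ →ₗ[ℂ] ℂ where
  toFun X := star φ ⬝ᵥ ((B * X * B) *ᵥ φ)
  map_add' X Y := by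
    simp [Matrix.mul_add, Matrix.add_mul, add_mulVec, dotProduct_add]
  map_smul' c X := by
    simp [Matrix.mul_smul, Matrix.smul_mul, smul_mulVec, dotProduct_smul]

def qfC (B : Matrix (Fin m) (Fin m) ℂ) (φ : Fin m → ℂ) :
    Matrix (Fin m) (Fin m) ℂ →L[ℝ] ℂ :=
  (LinearMap.toContinuousLinearMap (qf B φ)).restrictScalars ℝ

lemma qfC_apply (B : Matrix (Fin m) (Fin m) ℂ) (φ : Fin m → ℂ)
    (X : Matrix (Fin m) (Fin m) ℂ) :
    qfC B φ X = star φ ⬝ᵥ ((B * X * B) *ᵥ φ) := rfl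

lemma hasDerivAt_q {u : ℝ → Matrix (Fin m) (Fin m) ℂ} {u' : Matrix (Fin m) (Fin m) ℂ}
    {t : ℝ} (B : Matrix (Fin m) (Fin m) ℂ) (φ : Fin m → ℂ) (hu : HasDerivAt u u' t) :
    HasDerivAt (fun s => star φ ⬝ᵥ ((B * u s * B) *ᵥ φ))
      (star φ ⬝ᵥ ((B * u' * B) *ᵥ φ)) t := by
  have h := (qfC B φ).hasFDerivAt.comp_hasDerivAt t hu
  exact h

lemma hasDerivAt_h_eps (hH0 : H0.IsHermitian) (hV : V.IsHermitian) (hVp : V.PosSemidef)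
    (hBh : B.IsHermitian) (hdel : 0 < del) (φ : Fin m → ℂ) (lam e : ℝ) (he : 0 ≤ e) :
    HasDerivAt (fun t => star φ ⬝ᵥ ((kMat m H0 V B E lam t del) *ᵥ φ))
      (-(Complex.I * dK H0 V B E del φ lam e)) e := by
  have hu := hasDerivAt_regMat_eps H0 V E del lam e
  have hunit := regMat_isUnit H0 V E del hH0 hV hVp hdel lam e he
  have hinv := hasDerivAt_inv_mat hu hunit
  have h := hasDerivAt_q B φ hinv
  have heq : star φ ⬝ᵥ ((B * -((regMat m H0 V E lam e del)⁻¹ * Complex.I • V *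
      (regMat m H0 V E lam e del)⁻¹) * B) *ᵥ φ)
      = -(Complex.I * dK H0 V B E del φ lam e) := by
    rw [dK]
    rw [show (regMat m H0 V E lam e del)⁻¹ * Complex.I • V * (regMat m H0 V E lam e del)⁻¹
      = Complex.I • ((regMat m H0 V E lam e del)⁻¹ * V * (regMat m H0 V E lam e del)⁻¹) by
        rw [mul_smul_comm, smul_mul_assoc]]
    rw [Matrix.mul_neg, Matrix.neg_mul, Matrix.neg_mulVec, dotProduct_neg,
      mul_smul_comm, smul_mul_assoc, smul_mulVec, dotProduct_smul, smul_eq_mul]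
  rw [← heq]
  convert h using 2
  rfl

lemma hasDerivAt_h_lam (hH0 : H0.IsHermitian) (hV : V.IsHermitian) (hVp : V.PosSemidef)
    (hBh : B.IsHermitian) (hdel : 0 < del) (φ : Fin m → ℂ) (lam e : ℝ) (he : 0 ≤ e) :
    HasDerivAt (fun s => star φ ⬝ᵥ ((kMat m H0 V B E s e del) *ᵥ φ))
      (-(dK H0 V B E del φ lam e)) lam := by
  have hu := hasDerivAt_regMat_lam H0 V E del lam e
  have hunit := regMat_isUnit H0 V E del hH0 hV hVp hdel lam e he
  have hinv := hasDerivAt_inv_mat hu hunit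
  have h := hasDerivAt_q B φ hinv
  have heq : star φ ⬝ᵥ ((B * -((regMat m H0 V E lam e del)⁻¹ * V *
      (regMat m H0 V E lam e del)⁻¹) * B) *ᵥ φ)
      = -(dK H0 V B E del φ lam e) := by
    rw [dK, Matrix.mul_neg, Matrix.neg_mul, Matrix.neg_mulVec, dotProduct_neg]
  rw [← heq]
  convert h using 2
  rfl

lemma cont_h (hH0 : H0.IsHermitian) (hV : V.IsHermitian) (hVp : V.PosSemidef)
    (hBh : B.IsHermitian) (hdel : 0 < del) (φ : Fin m → ℂ) (e : ℝ) (he : 0 ≤ e) :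
    Continuous (fun lam => star φ ⬝ᵥ ((kMat m H0 V B E lam e del) *ᵥ φ)) :=
  continuous_iff_continuousAt.2 fun lam =>
    (hasDerivAt_h_lam H0 V B E del hH0 hV hVp hBh hdel φ lam e he).continuousAt

lemma cont_R (hH0 : H0.IsHermitian) (hV : V.IsHermitian) (hVp : V.PosSemidef)
    (hdel : 0 < del) (e : ℝ) (he : 0 ≤ e) :
    Continuous (fun lam => (regMat m H0 V E lam e del)⁻¹) := by
  have h0 : (fun lam => (regMat m H0 V E lam e del)⁻¹)
      = fun lam => Ring.inverse (regMat m H0 V E lam e del) := by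
    funext s; rw [Matrix.nonsing_inv_eq_ringInverse]
  rw [h0]
  refine continuous_iff_continuousAt.2 fun lam => ?_
  exact (((hasDerivAt_regMat_lam H0 V E del lam e).differentiableAt).inverse
    (regMat_isUnit H0 V E del hH0 hV hVp hdel lam e he)).continuousAt

lemma cont_dK (hH0 : H0.IsHermitian) (hV : V.IsHermitian) (hVp : V.PosSemidef)
    (hdel : 0 < del) (φ : Fin m → ℂ) (e : ℝ) (he : 0 ≤ e) :
    Continuous (fun lam => dK H0 V B E del φ lam e) := by
  have hR := cont_R H0 V E del hH0 hV hVp hdel e he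
  have : Continuous fun lam => (regMat m H0 V E lam e del)⁻¹ * V *
      (regMat m H0 V E lam e del)⁻¹ := (hR.mul continuous_const).mul hR
  exact (qfC B φ).continuous.comp this

end Main

end Aux14


/-- for `g ∈ C¹` with `g, g' ∈ L¹` and a unit vector `φ`, the function
`ε ↦ F(ε, δ)` is differentiable on `(0, ∞)` with `i·F'(ε) = ∫ g'(λ) ⟨φ, K(λ,ε,δ) φ⟩ dλ`,
so that `|F'(ε)| ≤ (ε c0)⁻¹ ‖g'‖₁`. -/
theorem Fval_hasDerivAt
    (m : ℕ) (hm : 1 ≤ m) (H0 V B : Matrix (Fin m) (Fin m) ℂ)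
    (hH0 : H0.IsHermitian) (hV : V.IsHermitian) (hB : B.PosSemidef)
    (c0 : ℝ) (hc0 : 0 < c0) (hVB : (V - (c0 : ℂ) • (B * B)).PosSemidef)
    (g : ℝ → ℝ) (hg : ContDiff ℝ 1 g)
    (hg1 : Integrable g) (hg2 : Integrable (deriv g))
    (φ : Fin m → ℂ) (hφ : (∑ i, ‖φ i‖ ^ 2) = 1)
    (E : ℝ) (del : ℝ) (hdel : 0 < del) :
    ∀ eps : ℝ, 0 < eps → ∃ F' : ℂ,
      HasDerivAt (fun e => Fval m H0 V B E g φ e del) F' eps ∧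
      Complex.I * F' =
        ∫ lam : ℝ, ((deriv g lam : ℝ) : ℂ) * (star φ ⬝ᵥ (kMat m H0 V B E lam eps del).mulVec φ) ∧
      ‖F'‖ ≤ (eps * c0)⁻¹ * ∫ x, |deriv g x| := by
  intro eps heps
  have hVp : V.PosSemidef := Aux14.hVpsd V B c0 hB hc0 hVB
  set CV : ℝ := ‖Matrix.toEuclideanCLM (𝕜 := ℂ) V‖ with hCV
  set C : ℝ := ‖Aux14.eV (B *ᵥ φ)‖ ^ 2 * CV * (del⁻¹ * del⁻¹) with hC
  have hC0 : 0 ≤ C := by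
    rw [hC]
    have : (0:ℝ) ≤ CV := hCV ▸ norm_nonneg _
    positivity
  -- the function and its candidate derivative
  set h : ℝ → ℝ → ℂ := fun x a => star φ ⬝ᵥ ((kMat m H0 V B E a x del) *ᵥ φ) with hh
  set F : ℝ → ℝ → ℂ := fun x a => (g a : ℂ) * h x a with hF
  set F'f : ℝ → ℝ → ℂ :=
    fun x a => (g a : ℂ) * (-(Complex.I * Aux14.dK H0 V B E del φ a x)) with hF'
  have hball : ∀ x ∈ ball eps (eps / 2), (0:ℝ) ≤ x := by
    intro x hx
    rw [mem_ball, Real.dist_eq, abs_sub_lt_iff] at hx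
    linarith [hx.2]
  have hgc : Continuous g := hg.continuous
  have hg'c : Continuous (deriv g) := hg.continuous_deriv le_rfl
  have hcont_h : ∀ x : ℝ, 0 ≤ x → Continuous (h x) := fun x hx =>
    Aux14.cont_h H0 V B E del hH0 hV hVp hB.1 hdel φ x hx
  have hcont_dK : ∀ x : ℝ, 0 ≤ x → Continuous (fun a => Aux14.dK H0 V B E del φ a x) :=
    fun x hx => Aux14.cont_dK H0 V B E del hH0 hV hVp hdel φ x hx
  have hkey : ∀ a : ℝ, ‖h eps a‖ ≤ (eps * c0)⁻¹ := fun a =>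
    Aux14.key_bound H0 V B c0 E del hH0 hV hB hc0 hVB hdel φ hφ a eps heps
  have hdKb : ∀ (a : ℝ) (x : ℝ), 0 ≤ x → ‖Aux14.dK H0 V B E del φ a x‖ ≤ C :=
    fun a x hx => Aux14.dK_bound H0 V B E del hH0 hV hVp hB.1 hdel φ a x hx
  have hint_F : Integrable (F eps) := by
    refine (hg1.abs.const_mul ((eps * c0)⁻¹)).mono'
      (((Complex.continuous_ofReal.comp hgc).mul (hcont_h eps heps.le)).aestronglyMeasurable) ?_
    filter_upwards with a
    rw [hF]
    simp only [norm_mul, Complex.norm_real, Real.norm_eq_abs]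
    calc |g a| * ‖h eps a‖ ≤ |g a| * (eps * c0)⁻¹ :=
          mul_le_mul_of_nonneg_left (hkey a) (abs_nonneg _)
    _ = (eps * c0)⁻¹ * |g a| := mul_comm _ _
  have hdom := hasDerivAt_integral_of_dominated_loc_of_deriv_le (μ := volume)
      (F := F) (F' := F'f) (x₀ := eps) (bound := fun a => |g a| * C)
      (ball_mem_nhds eps (half_pos heps))
      ?_ hint_F ?_ ?_ (hg1.abs.mul_const C) ?_
  rotate_left
  · filter_upwards [eventually_gt_nhds heps] with x hx
    exact ((Complex.continuous_ofReal.comp hgc).mul (hcont_h x hx.le)).aestronglyMeasurable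
  · exact ((Complex.continuous_ofReal.comp hgc).mul
      ((continuous_const.mul (hcont_dK eps heps.le)).neg)).aestronglyMeasurable
  · filter_upwards with a
    intro x hx
    rw [hF']
    simp only [norm_mul, Complex.norm_real, Real.norm_eq_abs, norm_neg,
      _root_.map_mul, Complex.norm_I, one_mul]
    exact mul_le_mul_of_nonneg_left (hdKb a x (hball x hx)) (abs_nonneg _)
  · filter_upwards with a
    intro x hx
    exact (Aux14.hasDerivAt_h_eps H0 V B E del hH0 hV hVp hB.1 hdel φ a x
      (hball x hx)).const_mul ((g a : ℂ))
  obtain ⟨hF'int, hder⟩ := hdom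
  -- the value of the derivative
  set J : ℂ := ∫ a, (g a : ℂ) * Aux14.dK H0 V B E del φ a eps with hJ
  have hJ_int : Integrable fun a => (g a : ℂ) * Aux14.dK H0 V B E del φ a eps := by
    refine (hg1.abs.mul_const C).mono' ?_ ?_
    · exact ((Complex.continuous_ofReal.comp hgc).mul (hcont_dK eps heps.le)).aestronglyMeasurable
    · filter_upwards with a
      simp only [norm_mul, Complex.norm_real, Real.norm_eq_abs]
      exact mul_le_mul_of_nonneg_left (hdKb a eps heps.le) (abs_nonneg _)
  have hFval : (∫ a, F'f eps a) = -Complex.I * J := by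
    rw [hJ, ← integral_const_mul]
    congr 1
    funext a
    rw [hF']
    ring
  -- integration by parts
  have hibp : J = ∫ a, ((deriv g a : ℝ) : ℂ) * h eps a := by
    have hu : ∀ x : ℝ, HasDerivAt (fun a : ℝ => ((g a : ℝ) : ℂ)) ((deriv g x : ℝ) : ℂ) x := by
      intro x
      exact ((hg.differentiable one_ne_zero x).hasDerivAt).ofReal_comp
    have hv : ∀ a : ℝ, HasDerivAt (h eps) (-(Aux14.dK H0 V B E del φ a eps)) a := fun a =>
      Aux14.hasDerivAt_h_lam H0 V B E del hH0 hV hVp hB.1 hdel φ a eps heps.le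
    have huv' : Integrable ((fun a => ((g a : ℝ) : ℂ)) * fun a =>
        -(Aux14.dK H0 V B E del φ a eps)) := by
      have := hJ_int.neg
      refine this.congr ?_
      filter_upwards with a
      simp [Pi.mul_apply]
    have hu'v : Integrable ((fun a => ((deriv g a : ℝ) : ℂ)) * h eps) := by
      refine ((hg2.abs.mul_const ((eps * c0)⁻¹)).mono' ?_ ?_)
      · exact ((Complex.continuous_ofReal.comp hg'c).mul (hcont_h eps heps.le)).aestronglyMeasurable
      · filter_upwards with a
        simp only [Pi.mul_apply, norm_mul, Complex.norm_real, Real.norm_eq_abs]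
        exact mul_le_mul_of_nonneg_left (hkey a) (abs_nonneg _)
    have huv : Integrable ((fun a => ((g a : ℝ) : ℂ)) * h eps) := by
      refine ((hg1.abs.mul_const ((eps * c0)⁻¹)).mono' ?_ ?_)
      · exact ((Complex.continuous_ofReal.comp hgc).mul (hcont_h eps heps.le)).aestronglyMeasurable
      · filter_upwards with a
        simp only [Pi.mul_apply, norm_mul, Complex.norm_real, Real.norm_eq_abs]
        exact mul_le_mul_of_nonneg_left (hkey a) (abs_nonneg _)
    have hparts := MeasureTheory.integral_mul_deriv_eq_deriv_mul_of_integrable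
      (fun x _ => hu x) (fun x _ => hv x) huv' hu'v huv
    -- hparts : ∫ g a * (-(dK a eps)) = - ∫ g' a * h eps a
    have h1 : (∫ a : ℝ, ((g a : ℝ) : ℂ) * -(Aux14.dK H0 V B E del φ a eps)) = -J := by
      rw [hJ, ← integral_neg]
      congr 1
      funext a
      ring
    rw [h1] at hparts
    have := neg_injective hparts
    rw [this]
  refine ⟨∫ a, F'f eps a, hder, ?_, ?_⟩
  · rw [hFval, hibp, ← mul_assoc]
    have hI : Complex.I * -Complex.I = 1 := by simp [Complex.I_mul_I]
    rw [hI, one_mul]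
  · rw [hFval]
    have habs : ‖-Complex.I * J‖ = ‖J‖ := by
      simp [_root_.map_mul]
    rw [habs, hibp]
    calc ‖∫ a, ((deriv g a : ℝ) : ℂ) * h eps a‖
        ≤ ∫ a, ‖((deriv g a : ℝ) : ℂ) * h eps a‖ := by
          exact norm_integral_le_integral_norm _
    _ ≤ ∫ a, |deriv g a| * (eps * c0)⁻¹ := by
        refine integral_mono_of_nonneg (Filter.Eventually.of_forall fun a => norm_nonneg _)
          (hg2.abs.mul_const _) ?_
        filter_upwards with a
        simp only [norm_mul, Complex.norm_real, Real.norm_eq_abs]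
        exact mul_le_mul_of_nonneg_left (hkey a) (abs_nonneg _)
    _ = (eps * c0)⁻¹ * ∫ x, |deriv g x| := by
        rw [integral_mul_const]
        ring

end
end

section
/- Let g: ℝ → ℝ be continuously differentiable with g, g' ∈ L¹(ℝ), and let φ ∈ ℂ^m with ‖φ‖ = 1. Then for every E ∈ ℝ, every δ > 0 and every ε ∈ (0, 1), |F(ε, δ)| ≤ c_0^{-1}·‖g'‖_{L¹}·|log ε| + c_0^{-1}·‖g‖_{L¹}. -/
open Matrix MeasureTheory
open scoped ComplexOrder
open scoped Matrix.Norms.L2Operator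

noncomputable section

namespace FvalAux
variable {m : ℕ}

def en (x : Fin m → ℂ) : ℝ := ‖(WithLp.equiv 2 (Fin m → ℂ)).symm x‖

lemma en_nonneg (x : Fin m → ℂ) : 0 ≤ en x := norm_nonneg _

lemma en_eq_zero {x : Fin m → ℂ} (h : en x = 0) : x = 0 := by
  have := norm_eq_zero.mp h
  simpa using congrArg (WithLp.equiv 2 (Fin m → ℂ)) this

lemma cs (x y : Fin m → ℂ) : ‖star x ⬝ᵥ y‖ ≤ en x * en y := by
  have := norm_inner_le_norm (𝕜 := ℂ) ((WithLp.equiv 2 (Fin m → ℂ)).symm x)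
    ((WithLp.equiv 2 (Fin m → ℂ)).symm y)
  have e : inner ℂ ((WithLp.equiv 2 (Fin m → ℂ)).symm x) ((WithLp.equiv 2 (Fin m → ℂ)).symm y)
      = star x ⬝ᵥ y := by rw [dotProduct_comm]; rfl
  rwa [e] at this

lemma dot_self_eq_en_sq (x : Fin m → ℂ) : star x ⬝ᵥ x = ((en x ^ 2 : ℝ) : ℂ) := by
  have := inner_self_eq_norm_sq_to_K (𝕜 := ℂ) ((WithLp.equiv 2 (Fin m → ℂ)).symm x)
  have e : inner ℂ ((WithLp.equiv 2 (Fin m → ℂ)).symm x) ((WithLp.equiv 2 (Fin m → ℂ)).symm x)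
      = star x ⬝ᵥ x := by rw [dotProduct_comm]; rfl
  rw [e] at this
  exact_mod_cast this

lemma en_mulVec_le (A : Matrix (Fin m) (Fin m) ℂ) (x : Fin m → ℂ) :
    en (A.mulVec x) ≤ ‖A‖ * en x :=
  A.l2_opNorm_mulVec ((WithLp.equiv 2 (Fin m → ℂ)).symm x)

lemma dot_conjTranspose (A : Matrix (Fin m) (Fin m) ℂ) (x : Fin m → ℂ) :
    star x ⬝ᵥ Aᴴ.mulVec x = star (star x ⬝ᵥ A.mulVec x) := by
  calc star x ⬝ᵥ Aᴴ.mulVec x = (star x ᵥ* Aᴴ) ⬝ᵥ x := by rw [dotProduct_mulVec]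
    _ = star (A.mulVec x) ⬝ᵥ x := by rw [star_mulVec]
    _ = star (star x ⬝ᵥ A.mulVec x) := by rw [star_dotProduct]

lemma herm_dot_real {A : Matrix (Fin m) (Fin m) ℂ} (hA : A.IsHermitian) (x : Fin m → ℂ) :
    (star x ⬝ᵥ A.mulVec x).im = 0 := by
  have := congrArg Complex.im ((hA.eq ▸ dot_conjTranspose A x : _))
  simp only [Complex.star_def, Complex.conj_im] at this
  linarith

section Main
variable {H0 V B : Matrix (Fin m) (Fin m) ℂ} {c0 E del : ℝ}

lemma quad_im (hH0 : H0.IsHermitian) (hV : V.IsHermitian) (lam eps : ℝ) (x : Fin m → ℂ) :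
    (star x ⬝ᵥ (regMat m H0 V E lam eps del).mulVec x).im
      = del * (en x) ^ 2 + eps * (star x ⬝ᵥ V.mulVec x).re := by
  have hx := dot_self_eq_en_sq x
  have h0 := herm_dot_real hH0 x
  have hv := herm_dot_real hV x
  simp only [regMat, add_mulVec, sub_mulVec, smul_mulVec, one_mulVec,
    dotProduct_add, dotProduct_sub, dotProduct_smul, smul_eq_mul]
  rw [hx]
  simp only [Complex.add_im, Complex.sub_im, Complex.mul_im, Complex.mul_re,
    Complex.ofReal_re, Complex.ofReal_im, Complex.I_re, Complex.I_im, h0, hv]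
  ring

lemma quadB2 (hB : B.PosSemidef) (x : Fin m → ℂ) :
    star x ⬝ᵥ (B * B).mulVec x = ((en (B.mulVec x) ^ 2 : ℝ) : ℂ) := by
  calc star x ⬝ᵥ (B * B).mulVec x = star x ⬝ᵥ B.mulVec (B.mulVec x) := by rw [← mulVec_mulVec]
    _ = (star x ᵥ* B) ⬝ᵥ B.mulVec x := by rw [dotProduct_mulVec]
    _ = star (B.mulVec x) ⬝ᵥ B.mulVec x := by rw [star_mulVec, hB.1.eq]
    _ = _ := dot_self_eq_en_sq _

lemma quadV_re (hB : B.PosSemidef) (hVB : (V - (c0 : ℂ) • (B * B)).PosSemidef) (x : Fin m → ℂ) :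
    c0 * en (B.mulVec x) ^ 2 ≤ (star x ⬝ᵥ V.mulVec x).re := by
  have h := hVB.dotProduct_mulVec_nonneg x
  rw [sub_mulVec, dotProduct_sub, smul_mulVec, dotProduct_smul, quadB2 hB] at h
  rw [Complex.le_def] at h
  obtain ⟨h1, -⟩ := h
  simp only [Complex.zero_re, Complex.sub_re, smul_eq_mul, Complex.mul_re, Complex.ofReal_re,
    Complex.ofReal_im] at h1
  linarith

lemma quadV_re_nonneg (hB : B.PosSemidef) (hc0 : 0 < c0)
    (hVB : (V - (c0 : ℂ) • (B * B)).PosSemidef) (x : Fin m → ℂ) :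
    0 ≤ (star x ⬝ᵥ V.mulVec x).re :=
  le_trans (by positivity) (quadV_re hB hVB x)

lemma quad_im_lb (hH0 : H0.IsHermitian) (hV : V.IsHermitian) (hB : B.PosSemidef) (hc0 : 0 < c0)
    (hVB : (V - (c0 : ℂ) • (B * B)).PosSemidef) (lam eps : ℝ) (heps : 0 ≤ eps) (x : Fin m → ℂ) :
    del * en x ^ 2 ≤ |(star x ⬝ᵥ (regMat m H0 V E lam eps del).mulVec x).im| := by
  rw [quad_im hH0 hV]
  have := quadV_re_nonneg hB hc0 hVB x
  rcases le_or_gt 0 del with h | h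
  · rw [abs_of_nonneg (by nlinarith [en_nonneg x, sq_nonneg (en x)])]
    nlinarith
  · nlinarith [abs_nonneg (del * en x ^ 2 + eps * (star x ⬝ᵥ V.mulVec x).re),
      sq_nonneg (en x)]

lemma regMat_isUnit (hH0 : H0.IsHermitian) (hV : V.IsHermitian) (hB : B.PosSemidef)
    (hc0 : 0 < c0) (hVB : (V - (c0 : ℂ) • (B * B)).PosSemidef) (hdel : 0 < del)
    (lam eps : ℝ) (heps : 0 ≤ eps) :
    IsUnit (regMat m H0 V E lam eps del) := by
  rw [← Matrix.mulVec_injective_iff_isUnit]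
  have hker : ∀ x, (regMat m H0 V E lam eps del).mulVec x = 0 → x = 0 := by
    intro x hx
    have him := quad_im (del := del) (E := E) hH0 hV lam eps x
    rw [hx] at him
    simp only [dotProduct_zero, Complex.zero_im] at him
    have h1 := quadV_re_nonneg hB hc0 hVB x
    have h2 : en x ^ 2 ≤ 0 := by nlinarith [sq_nonneg (en x)]
    have : en x = 0 := by nlinarith [en_nonneg x, sq_nonneg (en x)]
    exact en_eq_zero this
  intro x y h
  have := hker (x - y) (by rw [mulVec_sub, h, sub_self])
  exact sub_eq_zero.mp this

lemma en_inv_mulVec_le {N : Matrix (Fin m) (Fin m) ℂ} (hN : IsUnit N) (hdel : 0 < del)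
    (h : ∀ x, del * en x ^ 2 ≤ |(star x ⬝ᵥ N.mulVec x).im|) (ψ : Fin m → ℂ) :
    en (N⁻¹.mulVec ψ) ≤ del⁻¹ * en ψ := by
  have hNx : N.mulVec (N⁻¹.mulVec ψ) = ψ := by
    rw [mulVec_mulVec, Matrix.mul_nonsing_inv _ ((Matrix.isUnit_iff_isUnit_det N).mp hN),
      one_mulVec]
  set x := N⁻¹.mulVec ψ with hxdef
  have h1 : del * en x ^ 2 ≤ |(star x ⬝ᵥ ψ).im| := by
    have := h x; rwa [hNx] at this
  have h2 : |(star x ⬝ᵥ ψ).im| ≤ en x * en ψ :=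
    le_trans (Complex.abs_im_le_norm _) (cs x ψ)
  rcases eq_or_lt_of_le (en_nonneg x) with h0 | h0
  · rw [← h0]; have := en_nonneg ψ; positivity
  · have hd : del * en x ≤ en ψ := by nlinarith
    calc en x = del⁻¹ * (del * en x) := by field_simp
      _ ≤ del⁻¹ * en ψ := by
          exact mul_le_mul_of_nonneg_left hd (by positivity)


lemma dot_BRB (hB : B.PosSemidef) (R : Matrix (Fin m) (Fin m) ℂ) (φ : Fin m → ℂ) :
    star φ ⬝ᵥ (B * R * B).mulVec φ = star (B.mulVec φ) ⬝ᵥ R.mulVec (B.mulVec φ) := by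
  rw [← mulVec_mulVec, ← mulVec_mulVec, dotProduct_mulVec (star φ)]
  congr 1
  rw [star_mulVec, hB.1.eq]

/-- The key quantitative bound `|⟨φ, B N⁻¹ B φ⟩| ≤ (c0 ε)⁻¹`. -/
lemma kfun_bound (hH0 : H0.IsHermitian) (hV : V.IsHermitian) (hB : B.PosSemidef)
    (hc0 : 0 < c0) (hVB : (V - (c0 : ℂ) • (B * B)).PosSemidef) (hdel : 0 < del)
    (lam eps : ℝ) (heps : 0 < eps) {φ : Fin m → ℂ} (hφ1 : en φ ≤ 1) :
    ‖star (B.mulVec φ) ⬝ᵥ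
      ((regMat m H0 V E lam eps del)⁻¹).mulVec (B.mulVec φ)‖ ≤ (c0 * eps)⁻¹ := by
  set N := regMat m H0 V E lam eps del with hN
  have hNu : IsUnit N := regMat_isUnit hH0 hV hB hc0 hVB hdel lam eps heps.le
  set ψ := B.mulVec φ with hψ
  set x := N⁻¹.mulVec ψ with hx
  have hNx : N.mulVec x = ψ := by
    rw [hx, mulVec_mulVec, Matrix.mul_nonsing_inv _ ((Matrix.isUnit_iff_isUnit_det N).mp hNu),
      one_mulVec]
  set t := star ψ ⬝ᵥ x with ht
  -- |t| ≤ en (B x)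
  have ht1 : ‖t‖ ≤ en (B.mulVec x) := by
    have : t = star φ ⬝ᵥ B.mulVec x := by
      rw [ht, hψ, star_mulVec, hB.1.eq, ← dotProduct_mulVec]
    rw [this]
    calc ‖star φ ⬝ᵥ B.mulVec x‖ ≤ en φ * en (B.mulVec x) := cs _ _
      _ ≤ 1 * en (B.mulVec x) := by
          exact mul_le_mul_of_nonneg_right hφ1 (en_nonneg _)
      _ = en (B.mulVec x) := one_mul _
  -- imaginary part inequality
  have him : eps * (c0 * en (B.mulVec x) ^ 2) ≤ -t.im := by
    have h1 : (star x ⬝ᵥ N.mulVec x).im = del * en x ^ 2 + eps * (star x ⬝ᵥ V.mulVec x).re :=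
      quad_im hH0 hV lam eps x
    have h2 : star x ⬝ᵥ N.mulVec x = star t := by
      rw [hNx, ht, star_dotProduct]
    rw [h2] at h1
    have h3 := quadV_re hB hVB x
    have h4 : (star t).im = -t.im := Complex.conj_im t
    nlinarith [en_nonneg x, sq_nonneg (en x)]
  have ht2 : -t.im ≤ ‖t‖ := by
    have := Complex.abs_im_le_norm t
    cases abs_cases t.im <;> linarith
  -- combine
  have haux : ‖t‖ ^ 2 ≤ en (B.mulVec x) ^ 2 :=
    pow_le_pow_left₀ (norm_nonneg t) ht1 2
  have key : c0 * eps * ‖t‖ ^ 2 ≤ ‖t‖ := by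
    have h5 := mul_le_mul_of_nonneg_left haux (le_of_lt (mul_pos hc0 heps))
    nlinarith
  rcases eq_or_lt_of_le (norm_nonneg t) with h0 | h0
  · rw [← h0]; positivity
  · have hce : 0 < c0 * eps := by positivity
    rw [inv_eq_one_div, le_div_iff₀ hce]
    nlinarith

/-- Uniform bound for `|⟨ψ, N⁻¹ V N⁻¹ ψ⟩|`. -/
lemma RVR_bound (hH0 : H0.IsHermitian) (hV : V.IsHermitian) (hB : B.PosSemidef)
    (hc0 : 0 < c0) (hVB : (V - (c0 : ℂ) • (B * B)).PosSemidef) (hdel : 0 < del)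
    (lam eps : ℝ) (heps : 0 ≤ eps) (ψ : Fin m → ℂ) :
    ‖star ψ ⬝ᵥ
      (((regMat m H0 V E lam eps del)⁻¹ * V * (regMat m H0 V E lam eps del)⁻¹).mulVec ψ)‖
      ≤ ‖V‖ * (del⁻¹ * en ψ) ^ 2 := by
  set N := regMat m H0 V E lam eps del with hNdef
  have hNu : IsUnit N := regMat_isUnit hH0 hV hB hc0 hVB hdel lam eps heps
  have hNHu : IsUnit Nᴴ := by
    rw [Matrix.isUnit_iff_isUnit_det, Matrix.det_conjTranspose]
    exact ((Matrix.isUnit_iff_isUnit_det N).mp hNu).star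
  set x := N⁻¹.mulVec ψ with hx
  set y := (Nᴴ)⁻¹.mulVec ψ with hy
  have hrw : star ψ ⬝ᵥ ((N⁻¹ * V * N⁻¹).mulVec ψ) = star y ⬝ᵥ V.mulVec x := by
    rw [← mulVec_mulVec, ← mulVec_mulVec, dotProduct_mulVec (star ψ)]
    congr 1
    rw [hy, ← Matrix.conjTranspose_nonsing_inv, star_mulVec, conjTranspose_conjTranspose]
  have hlb : ∀ z, del * en z ^ 2 ≤ |(star z ⬝ᵥ N.mulVec z).im| :=
    quad_im_lb hH0 hV hB hc0 hVB lam eps heps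
  have hlbH : ∀ z, del * en z ^ 2 ≤ |(star z ⬝ᵥ Nᴴ.mulVec z).im| := by
    intro z
    have h := dot_conjTranspose N z
    have : (star z ⬝ᵥ Nᴴ.mulVec z).im = -(star z ⬝ᵥ N.mulVec z).im := by
      rw [h, Complex.star_def, Complex.conj_im]
    rw [this, abs_neg]
    exact hlb z
  have hex : en x ≤ del⁻¹ * en ψ := en_inv_mulVec_le hNu hdel hlb ψ
  have hey : en y ≤ del⁻¹ * en ψ := en_inv_mulVec_le hNHu hdel hlbH ψ
  rw [hrw]
  calc ‖star y ⬝ᵥ V.mulVec x‖ ≤ en y * en (V.mulVec x) := cs _ _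
    _ ≤ en y * (‖V‖ * en x) := by
        exact mul_le_mul_of_nonneg_left (en_mulVec_le V x) (en_nonneg _)
    _ ≤ (del⁻¹ * en ψ) * (‖V‖ * en x) := by
        have h2 : 0 ≤ en x := en_nonneg _
        have h3 : (0:ℝ) ≤ ‖V‖ := norm_nonneg _
        exact mul_le_mul_of_nonneg_right hey (mul_nonneg h3 h2)
    _ ≤ (del⁻¹ * en ψ) * (‖V‖ * (del⁻¹ * en ψ)) := by
        have h2 : 0 ≤ en x := en_nonneg _
        have h3 : (0:ℝ) ≤ ‖V‖ := norm_nonneg _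
        have h4 : 0 ≤ del⁻¹ * en ψ := le_trans h2 hex
        exact mul_le_mul_of_nonneg_left (mul_le_mul_of_nonneg_left hex h3) h4
    _ = ‖V‖ * (del⁻¹ * en ψ) ^ 2 := by ring

end Main

section Calc
variable {H0 V B : Matrix (Fin m) (Fin m) ℂ} {c0 E del : ℝ}

lemma hasDerivAt_regMat_lam (eps lam : ℝ) :
    HasDerivAt (fun t : ℝ => regMat m H0 V E t eps del) V lam := by
  have h0 : HasDerivAt (fun t : ℝ => (t : ℂ)) 1 lam := (hasDerivAt_id lam).ofReal_comp
  have h1 : HasDerivAt (fun t : ℝ => (t : ℂ) • V) ((1:ℂ) • V) lam := h0.smul_const V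
  rw [one_smul] at h1
  exact (((h1.const_add H0).sub_const ((E : ℂ) • 1)).add_const
      ((Complex.I * (del : ℂ)) • 1)).add_const ((Complex.I * (eps : ℂ)) • V)

lemma hasDerivAt_regMat_eps (lam eps : ℝ) :
    HasDerivAt (fun s : ℝ => regMat m H0 V E lam s del) (Complex.I • V) eps := by
  have h0 : HasDerivAt (fun s : ℝ => (s : ℂ)) 1 eps := (hasDerivAt_id eps).ofReal_comp
  have h1 : HasDerivAt (fun s : ℝ => Complex.I * (s : ℂ)) Complex.I eps := by
    simpa using h0.const_mul Complex.I
  have h2 : HasDerivAt (fun s : ℝ => (Complex.I * (s : ℂ)) • V) (Complex.I • V) eps :=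
    h1.smul_const V
  exact h2.const_add (H0 + (lam : ℂ) • V - (E : ℂ) • 1 + (Complex.I * (del : ℂ)) • 1)

lemma hasDerivAt_ring_inverse_comp {Mf : ℝ → Matrix (Fin m) (Fin m) ℂ}
    {D : Matrix (Fin m) (Fin m) ℂ} {t0 : ℝ}
    (hMf : HasDerivAt Mf D t0) (hu : IsUnit (Mf t0)) :
    HasDerivAt (fun t => Ring.inverse (Mf t))
      (-(Ring.inverse (Mf t0) * D * Ring.inverse (Mf t0))) t0 := by
  haveI : CompleteSpace (Matrix (Fin m) (Fin m) ℂ) := FiniteDimensional.complete ℂ _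
  obtain ⟨u, hu'⟩ := hu
  have h := hasFDerivAt_ringInverse (𝕜 := ℂ) u
  rw [hu'] at h
  have h2 := (h.restrictScalars ℝ).comp_hasDerivAt t0 hMf
  simpa [← hu', Ring.inverse_unit, ContinuousLinearMap.mulLeftRight_apply, Function.comp_def] using h2

/-- The linear functional `A ↦ ⟨ψ, A ψ⟩` as a continuous linear map. -/
def Lfun (ψ : Fin m → ℂ) : Matrix (Fin m) (Fin m) ℂ →L[ℂ] ℂ :=
  LinearMap.toContinuousLinearMap
    { toFun := fun A => star ψ ⬝ᵥ A.mulVec ψ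
      map_add' := fun A B => by simp [add_mulVec, dotProduct_add]
      map_smul' := fun c A => by simp [smul_mulVec, dotProduct_smul] }

lemma Lfun_apply (ψ : Fin m → ℂ) (A : Matrix (Fin m) (Fin m) ℂ) :
    Lfun ψ A = star ψ ⬝ᵥ A.mulVec ψ := rfl

end Calc

/-- scalar resolvent function -/
def kR (m : ℕ) (H0 V : Matrix (Fin m) (Fin m) ℂ) (E del : ℝ) (ψ : Fin m → ℂ)
    (lam eps : ℝ) : ℂ :=
  star ψ ⬝ᵥ (Ring.inverse (regMat m H0 V E lam eps del)).mulVec ψ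

/-- scalar function `⟨ψ, R V R ψ⟩` -/
def dR (m : ℕ) (H0 V : Matrix (Fin m) (Fin m) ℂ) (E del : ℝ) (ψ : Fin m → ℂ)
    (lam eps : ℝ) : ℂ :=
  star ψ ⬝ᵥ ((Ring.inverse (regMat m H0 V E lam eps del) * V *
    Ring.inverse (regMat m H0 V E lam eps del)).mulVec ψ)

section Calc2
variable {H0 V B : Matrix (Fin m) (Fin m) ℂ} {c0 E del : ℝ}
variable (hH0 : H0.IsHermitian) (hV : V.IsHermitian) (hB : B.PosSemidef)
  (hc0 : 0 < c0) (hVB : (V - (c0 : ℂ) • (B * B)).PosSemidef) (hdel : 0 < del)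

include hH0 hV hB hc0 hVB hdel

lemma hasDerivAt_kR_lam (ψ : Fin m → ℂ) (lam eps : ℝ) (heps : 0 ≤ eps) :
    HasDerivAt (fun t => kR m H0 V E del ψ t eps) (-(dR m H0 V E del ψ lam eps)) lam := by
  have hu : IsUnit (regMat m H0 V E lam eps del) :=
    regMat_isUnit hH0 hV hB hc0 hVB hdel lam eps heps
  have h := hasDerivAt_ring_inverse_comp (hasDerivAt_regMat_lam (H0 := H0) eps lam) hu
  have h2 := ((Lfun ψ).hasFDerivAt.restrictScalars ℝ).comp_hasDerivAt lam h
  simpa [kR, dR, Lfun_apply, map_neg, Function.comp_def] using h2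

lemma hasDerivAt_kR_eps (ψ : Fin m → ℂ) (lam eps : ℝ) (heps : 0 ≤ eps) :
    HasDerivAt (fun s => kR m H0 V E del ψ lam s)
      (-(Complex.I * dR m H0 V E del ψ lam eps)) eps := by
  have hu : IsUnit (regMat m H0 V E lam eps del) :=
    regMat_isUnit hH0 hV hB hc0 hVB hdel lam eps heps
  have h := hasDerivAt_ring_inverse_comp (hasDerivAt_regMat_eps (H0 := H0) lam eps) hu
  have h2 := ((Lfun ψ).hasFDerivAt.restrictScalars ℝ).comp_hasDerivAt eps h
  have key : (Lfun ψ) (-(Ring.inverse (regMat m H0 V E lam eps del) * (Complex.I • V) *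
      Ring.inverse (regMat m H0 V E lam eps del))) = -(Complex.I * dR m H0 V E del ψ lam eps) := by
    rw [mul_smul_comm, smul_mul_assoc, map_neg, _root_.map_smul, smul_eq_mul, dR, Lfun_apply]
  rw [← key]
  simpa [kR, Lfun_apply, Function.comp_def] using h2

lemma continuous_RM (eps : ℝ) (heps : 0 ≤ eps) :
    Continuous (fun lam => Ring.inverse (regMat m H0 V E lam eps del)) := by
  rw [continuous_iff_continuousAt]
  intro lam
  exact (hasDerivAt_ring_inverse_comp (hasDerivAt_regMat_lam (H0 := H0) eps lam)
    (regMat_isUnit hH0 hV hB hc0 hVB hdel lam eps heps)).continuousAt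

lemma continuous_kR (ψ : Fin m → ℂ) (eps : ℝ) (heps : 0 ≤ eps) :
    Continuous (fun lam => kR m H0 V E del ψ lam eps) := by
  have := continuous_RM (E := E) hH0 hV hB hc0 hVB hdel eps heps
  exact (Lfun ψ).continuous.comp this

lemma continuous_dR (ψ : Fin m → ℂ) (eps : ℝ) (heps : 0 ≤ eps) :
    Continuous (fun lam => dR m H0 V E del ψ lam eps) := by
  have h := continuous_RM (E := E) hH0 hV hB hc0 hVB hdel eps heps
  exact (Lfun ψ).continuous.comp ((h.mul continuous_const).mul h)

-- bounds transported to kR / dR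
lemma kR_bound (lam eps : ℝ) (heps : 0 < eps) {φ : Fin m → ℂ} (hφ1 : en φ ≤ 1) :
    ‖kR m H0 V E del (B.mulVec φ) lam eps‖ ≤ (c0 * eps)⁻¹ := by
  rw [kR, ← Matrix.nonsing_inv_eq_ringInverse]
  exact kfun_bound hH0 hV hB hc0 hVB hdel lam eps heps hφ1

lemma dR_bound (lam eps : ℝ) (heps : 0 ≤ eps) (ψ : Fin m → ℂ) :
    ‖dR m H0 V E del ψ lam eps‖ ≤ ‖V‖ * (del⁻¹ * en ψ) ^ 2 := by
  rw [dR, ← Matrix.nonsing_inv_eq_ringInverse]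
  exact RVR_bound hH0 hV hB hc0 hVB hdel lam eps heps ψ

end Calc2

section MT
set_option linter.unusedSectionVars false
variable {H0 V B : Matrix (Fin m) (Fin m) ℂ} {c0 E del : ℝ} {g : ℝ → ℝ} {φ : Fin m → ℂ}
variable (hH0 : H0.IsHermitian) (hV : V.IsHermitian) (hB : B.PosSemidef)
  (hc0 : 0 < c0) (hVB : (V - (c0 : ℂ) • (B * B)).PosSemidef) (hdel : 0 < del)
  (hg : ContDiff ℝ 1 g) (hg1 : Integrable g) (hg2 : Integrable (deriv g))
  (hφ1 : en φ ≤ 1)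

lemma integral_cpull (c : ℂ) (f : ℝ → ℂ) : ∫ lam : ℝ, c * f lam = c * ∫ lam : ℝ, f lam := by
  simpa [smul_eq_mul] using integral_smul (μ := (volume : Measure ℝ)) c f

include hH0 hV hB hc0 hVB hdel hg hg1 hg2 hφ1

lemma int_gk (t : ℝ) (ht : 0 < t) :
    Integrable (fun lam => (g lam : ℂ) * kR m H0 V E del (B.mulVec φ) lam t) := by
  have hc : Continuous (fun lam => (g lam : ℂ) * kR m H0 V E del (B.mulVec φ) lam t) :=
    (Complex.continuous_ofReal.comp hg.continuous).mul
      (continuous_kR (E := E) hH0 hV hB hc0 hVB hdel _ t ht.le)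
  refine Integrable.mono' (μ := volume)
    (f := fun lam => (g lam : ℂ) * kR m H0 V E del (B.mulVec φ) lam t)
    (g := fun lam => (c0 * t)⁻¹ * |g lam|) ((hg1.abs).const_mul _) hc.aestronglyMeasurable ?_
  refine ae_of_all _ fun lam => ?_
  calc ‖(g lam : ℂ) * kR m H0 V E del (B.mulVec φ) lam t‖
      = |g lam| * ‖kR m H0 V E del (B.mulVec φ) lam t‖ := by
        rw [norm_mul, Complex.norm_real, Real.norm_eq_abs]
    _ ≤ |g lam| * (c0 * t)⁻¹ := mul_le_mul_of_nonneg_left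
        (kR_bound hH0 hV hB hc0 hVB hdel lam t ht hφ1) (abs_nonneg _)
    _ = (c0 * t)⁻¹ * |g lam| := mul_comm _ _

lemma int_g'k (t : ℝ) (ht : 0 < t) :
    Integrable (fun lam => ((deriv g lam : ℝ) : ℂ) * kR m H0 V E del (B.mulVec φ) lam t) := by
  have hc : Continuous (fun lam => ((deriv g lam : ℝ) : ℂ) *
      kR m H0 V E del (B.mulVec φ) lam t) :=
    (Complex.continuous_ofReal.comp (hg.continuous_deriv le_rfl)).mul
      (continuous_kR (E := E) hH0 hV hB hc0 hVB hdel _ t ht.le)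
  refine Integrable.mono' (μ := volume)
    (f := fun lam => ((deriv g lam : ℝ) : ℂ) * kR m H0 V E del (B.mulVec φ) lam t)
    (g := fun lam => (c0 * t)⁻¹ * |deriv g lam|) ((hg2.abs).const_mul _)
    hc.aestronglyMeasurable ?_
  refine ae_of_all _ fun lam => ?_
  calc ‖((deriv g lam : ℝ) : ℂ) * kR m H0 V E del (B.mulVec φ) lam t‖
      = |deriv g lam| * ‖kR m H0 V E del (B.mulVec φ) lam t‖ := by
        rw [norm_mul, Complex.norm_real, Real.norm_eq_abs]
    _ ≤ |deriv g lam| * (c0 * t)⁻¹ := mul_le_mul_of_nonneg_left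
        (kR_bound hH0 hV hB hc0 hVB hdel lam t ht hφ1) (abs_nonneg _)
    _ = (c0 * t)⁻¹ * |deriv g lam| := mul_comm _ _

lemma int_gd (t : ℝ) (ht : 0 ≤ t) :
    Integrable (fun lam => (g lam : ℂ) * dR m H0 V E del (B.mulVec φ) lam t) := by
  have hc : Continuous (fun lam => (g lam : ℂ) * dR m H0 V E del (B.mulVec φ) lam t) :=
    (Complex.continuous_ofReal.comp hg.continuous).mul
      (continuous_dR (E := E) hH0 hV hB hc0 hVB hdel _ t ht)
  refine Integrable.mono' (μ := volume)
    (f := fun lam => (g lam : ℂ) * dR m H0 V E del (B.mulVec φ) lam t)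
    (g := fun lam => (‖V‖ * (del⁻¹ * en (B.mulVec φ)) ^ 2) * |g lam|)
    ((hg1.abs).const_mul _) hc.aestronglyMeasurable ?_
  refine ae_of_all _ fun lam => ?_
  calc ‖(g lam : ℂ) * dR m H0 V E del (B.mulVec φ) lam t‖
      = |g lam| * ‖dR m H0 V E del (B.mulVec φ) lam t‖ := by
        rw [norm_mul, Complex.norm_real, Real.norm_eq_abs]
    _ ≤ |g lam| * (‖V‖ * (del⁻¹ * en (B.mulVec φ)) ^ 2) := mul_le_mul_of_nonneg_left
        (dR_bound hH0 hV hB hc0 hVB hdel lam t ht _) (abs_nonneg _)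
    _ = _ := mul_comm _ _

lemma ibp (t : ℝ) (ht : 0 < t) :
    (∫ lam : ℝ, (g lam : ℂ) * (-(Complex.I * dR m H0 V E del (B.mulVec φ) lam t)))
      = -Complex.I * ∫ lam : ℝ, ((deriv g lam : ℝ) : ℂ) *
          kR m H0 V E del (B.mulVec φ) lam t := by
  have hu : ∀ lam : ℝ, HasDerivAt (fun l : ℝ => ((g l : ℝ) : ℂ)) ((deriv g lam : ℝ) : ℂ) lam :=
    fun lam => ((hg.differentiable one_ne_zero).differentiableAt.hasDerivAt).ofReal_comp
  have hv : ∀ lam : ℝ, HasDerivAt (fun l => kR m H0 V E del (B.mulVec φ) l t)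
      (-(dR m H0 V E del (B.mulVec φ) lam t)) lam :=
    fun lam => hasDerivAt_kR_lam hH0 hV hB hc0 hVB hdel _ lam t ht.le
  have huv' : Integrable ((fun l : ℝ => ((g l : ℝ) : ℂ)) *
      fun l => -(dR m H0 V E del (B.mulVec φ) l t)) := by
    have h1 := (int_gd (E := E) hH0 hV hB hc0 hVB hdel hg hg1 hg2 hφ1 t ht.le).neg
    have h2 : ((fun l : ℝ => ((g l : ℝ) : ℂ)) *
        fun l => -(dR m H0 V E del (B.mulVec φ) l t))
        = fun l => -((g l : ℂ) * dR m H0 V E del (B.mulVec φ) l t) := by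
      funext l; simp only [Pi.mul_apply]; ring
    rw [h2]; exact h1
  have hu'v : Integrable ((fun l : ℝ => ((deriv g l : ℝ) : ℂ)) *
      fun l => kR m H0 V E del (B.mulVec φ) l t) := by
    have := int_g'k (E := E) hH0 hV hB hc0 hVB hdel hg hg1 hg2 hφ1 t ht
    simpa [Pi.mul_def] using this
  have huv : Integrable ((fun l : ℝ => ((g l : ℝ) : ℂ)) *
      fun l => kR m H0 V E del (B.mulVec φ) l t) := by
    have := int_gk (E := E) hH0 hV hB hc0 hVB hdel hg hg1 hg2 hφ1 t ht
    simpa [Pi.mul_def] using this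
  have h := integral_mul_deriv_eq_deriv_mul_of_integrable (fun x _ => hu x) (fun x _ => hv x) huv' hu'v huv
  calc ∫ lam : ℝ, (g lam : ℂ) * (-(Complex.I * dR m H0 V E del (B.mulVec φ) lam t))
      = ∫ lam : ℝ, Complex.I * ((g lam : ℂ) * -(dR m H0 V E del (B.mulVec φ) lam t)) := by
        congr 1; funext lam; ring
    _ = Complex.I * ∫ lam : ℝ, (g lam : ℂ) * -(dR m H0 V E del (B.mulVec φ) lam t) :=
        integral_cpull _ _
    _ = Complex.I * (- ∫ lam : ℝ, ((deriv g lam : ℝ) : ℂ) *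
          kR m H0 V E del (B.mulVec φ) lam t) := by rw [h]
    _ = _ := by ring

lemma hasDerivAt_Fint (t : ℝ) (ht : 0 < t) :
    HasDerivAt (fun s => ∫ lam : ℝ, (g lam : ℂ) * kR m H0 V E del (B.mulVec φ) lam s)
      (-Complex.I * ∫ lam : ℝ, ((deriv g lam : ℝ) : ℂ) *
        kR m H0 V E del (B.mulVec φ) lam t) t := by
  have h := hasDerivAt_integral_of_dominated_loc_of_deriv_le (μ := (volume : Measure ℝ))
    (x₀ := t) (s := Metric.ball t (t/2))
    (F := fun s lam => (g lam : ℂ) * kR m H0 V E del (B.mulVec φ) lam s)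
    (F' := fun s lam => (g lam : ℂ) * (-(Complex.I * dR m H0 V E del (B.mulVec φ) lam s)))
    (bound := fun lam => (‖V‖ * (del⁻¹ * en (B.mulVec φ)) ^ 2) * |g lam|)
    (Metric.ball_mem_nhds t (by positivity)) ?_ ?_ ?_ ?_ ?_ ?_
  · rw [← ibp (E := E) hH0 hV hB hc0 hVB hdel hg hg1 hg2 hφ1 t ht]
    exact h.2
  · filter_upwards [eventually_gt_nhds (show t/2 < t by linarith)] with s hs
    exact ((Complex.continuous_ofReal.comp hg.continuous).mul
      (continuous_kR (E := E) hH0 hV hB hc0 hVB hdel _ s (by linarith))).aestronglyMeasurable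
  · exact int_gk (E := E) hH0 hV hB hc0 hVB hdel hg hg1 hg2 hφ1 t ht
  · exact ((Complex.continuous_ofReal.comp hg.continuous).mul
      ((continuous_const.mul
        (continuous_dR (E := E) hH0 hV hB hc0 hVB hdel _ t ht.le)).neg)).aestronglyMeasurable
  · refine ae_of_all _ fun lam s hs => ?_
    have hs0 : 0 ≤ s := by
      rw [Metric.mem_ball, Real.dist_eq, abs_sub_lt_iff] at hs
      linarith
    calc ‖(g lam : ℂ) * (-(Complex.I * dR m H0 V E del (B.mulVec φ) lam s))‖
        = |g lam| * ‖dR m H0 V E del (B.mulVec φ) lam s‖ := by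
          rw [norm_mul, norm_neg, norm_mul, Complex.norm_I, Complex.norm_real, Real.norm_eq_abs,
            one_mul]
      _ ≤ |g lam| * (‖V‖ * (del⁻¹ * en (B.mulVec φ)) ^ 2) := mul_le_mul_of_nonneg_left
          (dR_bound hH0 hV hB hc0 hVB hdel lam s hs0 _) (abs_nonneg _)
      _ = _ := mul_comm _ _
  · exact (hg1.abs).const_mul _
  · refine ae_of_all _ fun lam s hs => ?_
    have hs0 : 0 ≤ s := by
      rw [Metric.mem_ball, Real.dist_eq, abs_sub_lt_iff] at hs
      linarith
    exact HasDerivAt.const_mul ((g lam : ℝ) : ℂ)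
      (hasDerivAt_kR_eps (E := E) hH0 hV hB hc0 hVB hdel _ lam s hs0)

lemma contAt_Fd (t : ℝ) (ht : 0 < t) :
    ContinuousAt (fun s => ∫ lam : ℝ, ((deriv g lam : ℝ) : ℂ) *
      kR m H0 V E del (B.mulVec φ) lam s) t := by
  apply continuousAt_of_dominated (bound := fun lam => (c0 * (t/2))⁻¹ * |deriv g lam|)
  · filter_upwards [eventually_gt_nhds (show t/2 < t by linarith)] with s hs
    exact ((Complex.continuous_ofReal.comp (hg.continuous_deriv le_rfl)).mul
      (continuous_kR (E := E) hH0 hV hB hc0 hVB hdel _ s (by linarith))).aestronglyMeasurable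
  · filter_upwards [eventually_gt_nhds (show t/2 < t by linarith)] with s hs
    refine ae_of_all _ fun lam => ?_
    have hs2 : 0 < t/2 := by linarith
    calc ‖((deriv g lam : ℝ) : ℂ) * kR m H0 V E del (B.mulVec φ) lam s‖
        = |deriv g lam| * ‖kR m H0 V E del (B.mulVec φ) lam s‖ := by
          rw [norm_mul, Complex.norm_real, Real.norm_eq_abs]
      _ ≤ |deriv g lam| * (c0 * s)⁻¹ := mul_le_mul_of_nonneg_left
          (kR_bound hH0 hV hB hc0 hVB hdel lam s (by linarith) hφ1) (abs_nonneg _)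
      _ ≤ |deriv g lam| * (c0 * (t/2))⁻¹ := by
          refine mul_le_mul_of_nonneg_left ?_ (abs_nonneg _)
          refine inv_anti₀ (by positivity) ?_
          exact mul_le_mul_of_nonneg_left hs.le hc0.le
      _ = _ := mul_comm _ _
  · exact (hg2.abs).const_mul _
  · refine ae_of_all _ fun lam => ?_
    exact continuousAt_const.mul
      (hasDerivAt_kR_eps (E := E) hH0 hV hB hc0 hVB hdel _ lam t ht.le).continuousAt

end MT
end FvalAux

/-- for `g ∈ C¹` with `g, g' ∈ L¹`, a unit vector `φ`, `δ > 0` and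
`ε ∈ (0,1)`, `|F(ε, δ)| ≤ c0⁻¹ ‖g'‖₁ |log ε| + c0⁻¹ ‖g‖₁`. -/
theorem Fval_log_bound
    (m : ℕ) (hm : 1 ≤ m) (H0 V B : Matrix (Fin m) (Fin m) ℂ)
    (hH0 : H0.IsHermitian) (hV : V.IsHermitian) (hB : B.PosSemidef)
    (c0 : ℝ) (hc0 : 0 < c0) (hVB : (V - (c0 : ℂ) • (B * B)).PosSemidef)
    (g : ℝ → ℝ) (hg : ContDiff ℝ 1 g)
    (hg1 : Integrable g) (hg2 : Integrable (deriv g))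
    (φ : Fin m → ℂ) (hφ : (∑ i, ‖φ i‖ ^ 2) = 1)
    (E : ℝ) (del : ℝ) (hdel : 0 < del) (eps : ℝ) (heps0 : 0 < eps) (heps1 : eps < 1) :
    ‖Fval m H0 V B E g φ eps del‖ ≤
      c0⁻¹ * (∫ x, |deriv g x|) * |Real.log eps| + c0⁻¹ * ∫ x, |g x| := by
  have hφ1 : FvalAux.en φ ≤ 1 := by
    rw [FvalAux.en, EuclideanSpace.norm_eq]
    simp only [WithLp.equiv_symm_apply, PiLp.toLp_apply]
    rw [hφ, Real.sqrt_one]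
  set ψ := B.mulVec φ with hψdef
  set G1 := ∫ x, |deriv g x| with hG1
  set G0 := ∫ x, |g x| with hG0
  have hG1nn : 0 ≤ G1 := integral_nonneg fun x => abs_nonneg _
  have hG0nn : 0 ≤ G0 := integral_nonneg fun x => abs_nonneg _
  set F : ℝ → ℂ := fun s => ∫ lam : ℝ, (g lam : ℂ) * FvalAux.kR m H0 V E del ψ lam s with hFdef
  set Fd : ℝ → ℂ :=
    fun s => ∫ lam : ℝ, ((deriv g lam : ℝ) : ℂ) * FvalAux.kR m H0 V E del ψ lam s with hFddef
  have hFval : Fval m H0 V B E g φ eps del = F eps := by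
    rw [Fval, hFdef]
    congr 1; funext lam
    congr 1
    rw [kMat, FvalAux.dot_BRB hB, Matrix.nonsing_inv_eq_ringInverse, FvalAux.kR, hψdef]
  have hderiv : ∀ t ∈ Set.uIcc eps 1, HasDerivAt F (-Complex.I * Fd t) t := by
    intro t htm
    rw [Set.uIcc_of_le heps1.le] at htm
    exact FvalAux.hasDerivAt_Fint hH0 hV hB hc0 hVB hdel hg hg1 hg2 hφ1 t
      (lt_of_lt_of_le heps0 htm.1)
  have hcontFd : ∀ t ∈ Set.uIcc eps 1, ContinuousAt Fd t := by
    intro t htm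
    rw [Set.uIcc_of_le heps1.le] at htm
    exact FvalAux.contAt_Fd hH0 hV hB hc0 hVB hdel hg hg1 hg2 hφ1 t
      (lt_of_lt_of_le heps0 htm.1)
  have hcont' : ContinuousOn (fun t => -Complex.I * Fd t) (Set.uIcc eps 1) :=
    fun t htm => (continuousAt_const.mul (hcontFd t htm)).continuousWithinAt
  have hii : IntervalIntegrable (fun t => -Complex.I * Fd t) volume eps 1 :=
    hcont'.intervalIntegrable
  have hftc := intervalIntegral.integral_eq_sub_of_hasDerivAt hderiv hii
  have hFdb : ∀ t, 0 < t → ‖Fd t‖ ≤ (c0 * t)⁻¹ * G1 := by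
    intro t ht
    refine le_trans (norm_integral_le_of_norm_le ((hg2.abs).const_mul ((c0*t)⁻¹)) ?_) ?_
    · refine ae_of_all _ fun lam => ?_
      calc ‖((deriv g lam : ℝ) : ℂ) * FvalAux.kR m H0 V E del ψ lam t‖
          = |deriv g lam| * ‖FvalAux.kR m H0 V E del ψ lam t‖ := by
            rw [norm_mul, Complex.norm_real, Real.norm_eq_abs]
        _ ≤ |deriv g lam| * (c0 * t)⁻¹ := mul_le_mul_of_nonneg_left
            (FvalAux.kR_bound hH0 hV hB hc0 hVB hdel lam t ht hφ1) (abs_nonneg _)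
        _ = (c0 * t)⁻¹ * |deriv g lam| := mul_comm _ _
    · rw [MeasureTheory.integral_const_mul]
  have habs : ‖F eps‖ ≤ ‖F 1‖ + ‖∫ t in eps..1, -Complex.I * Fd t‖ := by
    have h1 : F eps = F 1 - ∫ t in eps..1, -Complex.I * Fd t := by rw [hftc]; ring
    calc ‖F eps‖ = ‖F 1 - ∫ t in eps..1, -Complex.I * Fd t‖ := by
          rw [← h1]
      _ ≤ ‖F 1‖ + ‖∫ t in eps..1, -Complex.I * Fd t‖ := norm_sub_le _ _
      _ = _ := rfl
  have hIb : ‖∫ t in eps..1, -Complex.I * Fd t‖ ≤ c0⁻¹ * G1 * |Real.log eps| := by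
    have h2 : ‖∫ t in eps..1, -Complex.I * Fd t‖ ≤ ∫ t in eps..1, ‖-Complex.I * Fd t‖ :=
      intervalIntegral.norm_integral_le_integral_norm heps1.le
    have hptw : ∀ t ∈ Set.Icc eps 1, ‖-Complex.I * Fd t‖ ≤ c0⁻¹ * G1 * t⁻¹ := by
      intro t htm
      have ht : 0 < t := lt_of_lt_of_le heps0 htm.1
      rw [norm_mul, norm_neg, Complex.norm_I, one_mul]
      calc ‖Fd t‖ ≤ (c0 * t)⁻¹ * G1 := hFdb t ht
        _ = c0⁻¹ * G1 * t⁻¹ := by rw [mul_inv]; ring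
    have hn_ii : IntervalIntegrable (fun t => ‖-Complex.I * Fd t‖) volume eps 1 :=
      hcont'.norm.intervalIntegrable
    have hb_ii : IntervalIntegrable (fun t => c0⁻¹ * G1 * t⁻¹) volume eps 1 := by
      apply ContinuousOn.intervalIntegrable
      apply ContinuousOn.mul continuousOn_const
      intro t htm
      rw [Set.uIcc_of_le heps1.le] at htm
      exact (continuousAt_inv₀ (ne_of_gt (lt_of_lt_of_le heps0 htm.1))).continuousWithinAt
    have h3 := intervalIntegral.integral_mono_on heps1.le hn_ii hb_ii hptw
    have h4 : (∫ t in eps..1, c0⁻¹ * G1 * t⁻¹) = c0⁻¹ * G1 * |Real.log eps| := by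
      rw [intervalIntegral.integral_const_mul, integral_inv_of_pos heps0 one_pos]
      congr 1
      rw [one_div, Real.log_inv, abs_of_neg (Real.log_neg heps0 heps1)]
    rw [h4] at h3
    linarith
  have hF1 : ‖F 1‖ ≤ c0⁻¹ * G0 := by
    refine le_trans (norm_integral_le_of_norm_le ((hg1.abs).const_mul ((c0*1)⁻¹))
      (ae_of_all _ fun lam => ?_)) ?_
    swap
    · rw [MeasureTheory.integral_const_mul, mul_one]
    calc ‖(g lam : ℂ) * FvalAux.kR m H0 V E del ψ lam 1‖
          = |g lam| * ‖FvalAux.kR m H0 V E del ψ lam 1‖ := by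
            rw [norm_mul, Complex.norm_real, Real.norm_eq_abs]
        _ ≤ |g lam| * (c0 * 1)⁻¹ := mul_le_mul_of_nonneg_left
            (FvalAux.kR_bound hH0 hV hB hc0 hVB hdel lam 1 one_pos hφ1) (abs_nonneg _)
        _ = (c0 * 1)⁻¹ * |g lam| := mul_comm _ _
  rw [hFval]
  linarith

end
end
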